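/- arXiv:1508.01464 — 3 statements merged into one kernel-verified Lean document; each statement's English description precedes it below -/
import Mathlib

section
/- For every fixed 0 ≤ ε ≤ 1/2, Mrs. Gerber's function x ↦ φ(x,ε) is concave on [0,1]. -/
open Finset

/-- The boolean cube `{0,1}^n`. -/
abbrev Cube (n : ℕ) := Fin n → Bool

/-- Expectation over a uniform point of the cube. -/
noncomputable def EX {n : ℕ} (f : Cube n → ℝ) : ℝ :=
  (∑ x : Cube n, f x) / (2 ^ n : ℝ)

/-- The entropy functional `Ent(f) = E f log₂ f - (E f) log₂ (E f)`. -/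
noncomputable def Ent {n : ℕ} (f : Cube n → ℝ) : ℝ :=
  EX (fun x => f x * Real.logb 2 (f x)) - EX f * Real.logb 2 (EX f)

/-- The noise operator `T_ε`. -/
noncomputable def noiseOp {n : ℕ} (ε : ℝ) (f : Cube n → ℝ) : Cube n → ℝ :=
  fun x => ∑ y : Cube n, ε ^ (hammingDist y x) * (1 - ε) ^ (n - hammingDist y x) * f y

/-- Binary entropy function (base 2). -/
noncomputable def H2 (x : ℝ) : ℝ :=
  -(x * Real.logb 2 x) - (1 - x) * Real.logb 2 (1 - x)

/-- The inverse of the binary entropy function, `H₂⁻¹ : [0,1] → [0,1/2]`. -/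
noncomputable def H2inv (y : ℝ) : ℝ :=
  Function.invFunOn H2 (Set.Icc 0 (1 / 2)) y

/-- Mrs. Gerber's function `φ(x, ε)`. -/
noncomputable def phi (x ε : ℝ) : ℝ :=
  1 - H2 ((1 - 2 * ε) * H2inv (1 - x) + ε)

/-- Conditional expectation of `f` given the coordinates in `A`,
viewed as a function on the cube depending only on coordinates in `A`. -/
noncomputable def condE {n : ℕ} (f : Cube n → ℝ) (A : Finset (Fin n)) : Cube n → ℝ :=
  fun x => (∑ z : Cube n, f (fun i => if i ∈ A then x i else z i)) / (2 ^ n : ℝ)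

/-- `Ent(f | A) = Ent(E(f | A))`. -/
noncomputable def EntC {n : ℕ} (f : Cube n → ℝ) (A : Finset (Fin n)) : ℝ :=
  Ent (condE f A)

/-- Expectation over a random subset `T ⊆ [n]` obtained by including each element
independently with probability `l`. -/
noncomputable def ETsub {n : ℕ} (l : ℝ) (g : Finset (Fin n) → ℝ) : ℝ :=
  ∑ T : Finset (Fin n), l ^ T.card * (1 - l) ^ (n - T.card) * g T


/-- Marginal of a distribution `p` on the cube on the coordinates in `T`
(as a function on the cube, depending only on the coordinates in `T`). -/
noncomputable def marg {n : ℕ} (p : Cube n → ℝ) (T : Finset (Fin n)) (x : Cube n) : ℝ :=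
  ∑ y : Cube n, if ∀ i ∈ T, y i = x i then p y else 0

/-- Shannon entropy (base 2) of the marginal of `p` on the coordinates in `T`:
the sum goes over canonical representatives (coordinates outside `T` set to `false`). -/
noncomputable def margEnt {n : ℕ} (p : Cube n → ℝ) (T : Finset (Fin n)) : ℝ :=
  -∑ x : Cube n,
      if ∀ i ∉ T, x i = false then marg p T x * Real.logb 2 (marg p T x) else 0

/-- Shannon entropy (base 2) of a probability distribution on the cube. -/
noncomputable def shEnt {n : ℕ} (p : Cube n → ℝ) : ℝ :=
  -∑ y : Cube n, p y * Real.logb 2 (p y)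

/-- Walsh function `W_S(x) = (-1)^{∑_{i ∈ S} x_i}`. -/
def walsh {n : ℕ} (S : Finset (Fin n)) (x : Cube n) : ℝ :=
  ∏ i ∈ S, (if x i then (-1 : ℝ) else 1)

/-- Walsh–Fourier coefficient `f̂(S) = E_x f(x) W_S(x)`. -/
noncomputable def fourierCoef {n : ℕ} (f : Cube n → ℝ) (S : Finset (Fin n)) : ℝ :=
  EX (fun x => f x * walsh S x)

/-- The noise operator `T_{ε,R}` acting only in the directions in `R`
(the composition of the directional noise operators `T_{ε,i}`, `i ∈ R`). -/
noncomputable def noiseOpOn {n : ℕ} (ε : ℝ) (R : Finset (Fin n)) (g : Cube n → ℝ) :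
    Cube n → ℝ :=
  fun x => ∑ y : Cube n,
    (if ∀ i ∉ R, y i = x i then ∏ i ∈ R, (if y i = x i then 1 - ε else ε) else 0) * g y

/-- `I_g(A,m) = Ent(g | A ∪ {m}) - Ent(g | A) - Ent(g | {m})`. -/
noncomputable def Ifun {n : ℕ} (g : Cube n → ℝ) (A : Finset (Fin n)) (m : Fin n) : ℝ :=
  EntC g (insert m A) - EntC g A - EntC g {m}

/-- `Z_{S;i,j}(f) = Ent(f|S∪{i,j}) - Ent(f|S∪{i}) - Ent(f|S∪{j}) + Ent(f|S)`. -/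
noncomputable def Zfun {n : ℕ} (f : Cube n → ℝ) (S : Finset (Fin n)) (i j : Fin n) : ℝ :=
  EntC f (insert i (insert j S)) - EntC f (insert i S) - EntC f (insert j S) + EntC f S

/-- `Y(A,m,s)`: the average of `Z_{S;i,m}(f)` over subsets `S ⊆ A` with `|S| = s - 1`
and over `i ∈ A \ S`. -/
noncomputable def Yavg {n : ℕ} (f : Cube n → ℝ) (A : Finset (Fin n)) (m : Fin n) (s : ℕ) : ℝ :=
  (∑ S ∈ A.powerset.filter (fun S => S.card = s - 1), ∑ i ∈ A \ S, Zfun f S i m) /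
    (∑ S ∈ A.powerset.filter (fun S => S.card = s - 1), ((A \ S).card : ℝ))

/-- `Λ(k,s,λ) = 1 - ∑_{j=0}^{s-1} C(k,j) λ^j (1-λ)^{k-j}`. -/
noncomputable def Lam (k s : ℕ) (l : ℝ) : ℝ :=
  1 - ∑ j ∈ Finset.range s, (Nat.choose k j : ℝ) * l ^ j * (1 - l) ^ (k - j)

/-- `t_s`: the average of `Z_{S;i,j}(f)` over subsets `S ⊆ [n]` with `|S| = s - 1`
and over distinct `i, j ∉ S`. -/
noncomputable def tAvg {n : ℕ} (f : Cube n → ℝ) (s : ℕ) : ℝ :=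
  (∑ S ∈ (Finset.univ : Finset (Finset (Fin n))).filter (fun S => S.card = s - 1),
      ∑ i ∈ Sᶜ, ∑ j ∈ Sᶜ \ {i}, Zfun f S i j) /
    (∑ S ∈ (Finset.univ : Finset (Finset (Fin n))).filter (fun S => S.card = s - 1),
      ∑ i ∈ Sᶜ, ((Sᶜ \ {i}).card : ℝ))

/-- The entropy functional on an arbitrary finite set with uniform measure. -/
noncomputable def entFin {α : Type*} [Fintype α] (g : α → ℝ) : ℝ :=
  (∑ a, g a * Real.logb 2 (g a)) / (Fintype.card α : ℝ) -
    ((∑ a, g a) / (Fintype.card α : ℝ)) * Real.logb 2 ((∑ a, g a) / (Fintype.card α : ℝ))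


section MrsGerberAux
open Real Set

private lemma mgl_log2_pos : (0:ℝ) < Real.log 2 := Real.log_pos (by norm_num)

private lemma mgl_H2_eq (x : ℝ) : H2 x = Real.binEntropy x / Real.log 2 := by
  simp only [H2, Real.binEntropy, Real.logb, Real.log_inv]
  ring

private lemma mgl_H2_fun : H2 = fun x => Real.binEntropy x / Real.log 2 := funext mgl_H2_eq

private lemma mgl_H2_zero : H2 0 = 0 := by simp [mgl_H2_eq]

private lemma mgl_H2_half : H2 (1/2) = 1 := by
  rw [mgl_H2_eq, show (1/2:ℝ) = 2⁻¹ by norm_num, Real.binEntropy_two_inv,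
    div_self mgl_log2_pos.ne']

private lemma mgl_H2_cont : Continuous H2 := by
  rw [mgl_H2_fun]; exact Real.binEntropy_continuous.div_const _

private lemma mgl_H2_smono : StrictMonoOn H2 (Icc (0:ℝ) (1/2)) := by
  intro a ha b hb hab
  rw [mgl_H2_eq, mgl_H2_eq, div_lt_div_iff_of_pos_right mgl_log2_pos]
  have h : (1/2:ℝ) = 2⁻¹ := by norm_num
  exact Real.binEntropy_strictMonoOn (h ▸ ha) (h ▸ hb) hab

private lemma mgl_H2_hasDeriv {p : ℝ} (hp0 : p ≠ 0) (hp1 : p ≠ 1) :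
    HasDerivAt H2 ((Real.log (1 - p) - Real.log p) / Real.log 2) p := by
  rw [mgl_H2_fun]
  exact (Real.hasDerivAt_binEntropy hp0 hp1).div_const _

private lemma mgl_H2_mem {t : ℝ} (ht : t ∈ Icc (0:ℝ) (1/2)) : H2 t ∈ Icc (0:ℝ) 1 := by
  constructor
  · rw [mgl_H2_eq]
    exact div_nonneg (Real.binEntropy_nonneg ht.1 (by linarith [ht.2])) mgl_log2_pos.le
  · rw [mgl_H2_eq, div_le_one mgl_log2_pos]
    exact Real.binEntropy_le_log_two

private lemma mgl_H2_exists {y : ℝ} (hy : y ∈ Icc (0:ℝ) 1) :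
    ∃ t ∈ Icc (0:ℝ) (1/2), H2 t = y := by
  have h := intermediate_value_Icc (by norm_num : (0:ℝ) ≤ 1/2) mgl_H2_cont.continuousOn
  rw [mgl_H2_zero, mgl_H2_half] at h
  obtain ⟨t, ht, h2⟩ := h hy
  exact ⟨t, ht, h2⟩

private lemma mgl_H2inv_mem {y : ℝ} (hy : y ∈ Icc (0:ℝ) 1) : H2inv y ∈ Icc (0:ℝ) (1/2) :=
  Function.invFunOn_mem (mgl_H2_exists hy)

private lemma mgl_H2_H2inv {y : ℝ} (hy : y ∈ Icc (0:ℝ) 1) : H2 (H2inv y) = y :=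
  Function.invFunOn_eq (mgl_H2_exists hy)

private lemma mgl_H2inv_H2 {t : ℝ} (ht : t ∈ Icc (0:ℝ) (1/2)) : H2inv (H2 t) = t :=
  (mgl_H2_smono.injOn).leftInvOn_invFunOn ht

private lemma mgl_H2inv_smono : StrictMonoOn H2inv (Icc (0:ℝ) 1) := by
  intro a ha b hb hab
  by_contra h
  push_neg at h
  have := mgl_H2_smono.monotoneOn (mgl_H2inv_mem hb) (mgl_H2inv_mem ha) h
  rw [mgl_H2_H2inv ha, mgl_H2_H2inv hb] at this
  linarith

private lemma mgl_H2inv_zero : H2inv 0 = 0 := by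
  have := mgl_H2inv_H2 (t := 0) (by norm_num)
  rwa [mgl_H2_zero] at this

private lemma mgl_H2inv_one : H2inv 1 = 1/2 := by
  have := mgl_H2inv_H2 (t := 1/2) (by norm_num)
  rwa [mgl_H2_half] at this

private lemma mgl_H2inv_image : H2inv '' (Icc (0:ℝ) 1) = Icc (0:ℝ) (1/2) := by
  apply Set.Subset.antisymm
  · rintro _ ⟨y, hy, rfl⟩; exact mgl_H2inv_mem hy
  · intro t ht
    exact ⟨H2 t, mgl_H2_mem ht, mgl_H2inv_H2 ht⟩

private lemma mgl_H2inv_mem_open {y : ℝ} (hy : y ∈ Ioo (0:ℝ) 1) :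
    H2inv y ∈ Ioo (0:ℝ) (1/2) := by
  have hyc := Ioo_subset_Icc_self hy
  have hm := mgl_H2inv_mem hyc
  constructor
  · rcases eq_or_lt_of_le hm.1 with h | h
    · exfalso
      have h2 := mgl_H2_H2inv hyc
      rw [← h, mgl_H2_zero] at h2
      linarith [hy.1]
    · exact h
  · rcases eq_or_lt_of_le hm.2 with h | h
    · exfalso
      have h2 := mgl_H2_H2inv hyc
      rw [h, mgl_H2_half] at h2
      linarith [hy.2]
    · exact h

private lemma mgl_H2inv_contAt {u : ℝ} (hu : u ∈ Ioo (0:ℝ) 1) : ContinuousAt H2inv u := by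
  apply mgl_H2inv_smono.continuousAt_of_image_mem_nhds (Icc_mem_nhds hu.1 hu.2)
  rw [mgl_H2inv_image]
  exact Icc_mem_nhds (mgl_H2inv_mem_open hu).1 (mgl_H2inv_mem_open hu).2

private lemma mgl_H2inv_contOn : ContinuousOn H2inv (Icc (0:ℝ) 1) := by
  intro y hy
  rcases eq_or_lt_of_le hy.1 with h0 | h0
  · rw [← h0]
    have h := mgl_H2inv_smono.continuousWithinAt_right_of_image_mem_nhdsWithin
      (Icc_mem_nhdsGE_of_mem (left_mem_Ico.2 one_pos))
      (by rw [mgl_H2inv_image, mgl_H2inv_zero]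
          exact Icc_mem_nhdsGE_of_mem (left_mem_Ico.2 (by norm_num)))
    exact h.mono Icc_subset_Ici_self
  rcases eq_or_lt_of_le hy.2 with h1 | h1
  · rw [h1]
    have h := mgl_H2inv_smono.continuousWithinAt_left_of_image_mem_nhdsWithin
      (Icc_mem_nhdsLE_of_mem (right_mem_Ioc.2 one_pos))
      (by rw [mgl_H2inv_image, mgl_H2inv_one]
          exact Icc_mem_nhdsLE_of_mem (right_mem_Ioc.2 (by norm_num)))
    exact h.mono Icc_subset_Iic_self
  · exact (mgl_H2inv_contAt ⟨h0, h1⟩).continuousWithinAt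

private lemma mgl_H2inv_hasDeriv {u : ℝ} (hu : u ∈ Ioo (0:ℝ) 1) :
    HasDerivAt H2inv (((Real.log (1 - H2inv u) - Real.log (H2inv u)) / Real.log 2)⁻¹) u := by
  have ht := mgl_H2inv_mem_open hu
  have hL : 0 < Real.log (1 - H2inv u) - Real.log (H2inv u) := by
    have := Real.log_lt_log ht.1 (by linarith [ht.2] : H2inv u < 1 - H2inv u)
    linarith
  exact HasDerivAt.of_local_left_inverse (mgl_H2inv_contAt hu)
    (mgl_H2_hasDeriv ht.1.ne' (ne_of_lt (lt_trans ht.2 (by norm_num))))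
    (div_pos hL mgl_log2_pos).ne'
    (Filter.eventually_of_mem (isOpen_Ioo.mem_nhds hu)
      (fun y hy => mgl_H2_H2inv (Ioo_subset_Icc_self hy)))

private lemma mgl_log_ineq {s : ℝ} (hs : s ∈ Ico (0:ℝ) 1) :
    2 * s ≤ Real.log (1 + s) - Real.log (1 - s) := by
  set f : ℝ → ℝ := fun s => Real.log (1 + s) - Real.log (1 - s) - 2 * s with hf
  have hd : ∀ x ∈ Ioo (0:ℝ) 1, HasDerivAt f (1 / (1 + x) - (-1) / (1 - x) - 2 * 1) x := by
    intro x hx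
    have h1 : HasDerivAt (fun y : ℝ => Real.log (1 + y)) (1 / (1 + x)) x := by
      have := ((hasDerivAt_id x).const_add 1).log (by linarith [hx.1] : (1:ℝ) + x ≠ 0)
      simpa using this
    have h2 : HasDerivAt (fun y : ℝ => Real.log (1 - y)) ((-1) / (1 - x)) x := by
      have := ((hasDerivAt_id x).const_sub 1).log (by linarith [hx.2] : (1:ℝ) - x ≠ 0)
      simpa using this
    have h3 : HasDerivAt (fun y : ℝ => 2 * y) (2 * 1) x := (hasDerivAt_id x).const_mul 2
    exact (h1.sub h2).sub h3
  have hmono : MonotoneOn f (Ico (0:ℝ) 1) := by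
    apply monotoneOn_of_deriv_nonneg (convex_Ico 0 1)
    · apply ContinuousOn.sub (ContinuousOn.sub ?_ ?_) (by fun_prop)
      · exact ContinuousOn.log (by fun_prop) (fun x hx => by intro h; linarith [hx.1])
      · exact ContinuousOn.log (by fun_prop) (fun x hx => by intro h; linarith [hx.2])
    · rw [interior_Ico]
      exact fun x hx => (hd x hx).differentiableAt.differentiableWithinAt
    · rw [interior_Ico]
      intro x hx
      rw [(hd x hx).deriv]
      have h1 : (0:ℝ) < 1 + x := by linarith [hx.1]
      have h2 : (0:ℝ) < 1 - x := by linarith [hx.2]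
      have key : 2 ≤ 1 / (1 + x) + 1 / (1 - x) := by
        rw [div_add_div _ _ h1.ne' h2.ne', le_div_iff₀ (by positivity)]
        nlinarith [sq_nonneg x, hx.1]
      have hneg : (-1) / (1 - x) = -(1 / (1 - x)) := by ring
      rw [hneg]
      linarith
  have h0 : f 0 = 0 := by simp [hf]
  have hle := hmono (left_mem_Ico.2 one_pos) hs hs.1
  rw [h0] at hle
  simp only [hf] at hle
  linarith

private lemma mgl_keyB {p : ℝ} (hp : p ∈ Ioo (0:ℝ) (1/2)) :
    1 - 2*p ≤ (1 - 2*p + 2*p^2) * (Real.log (1 - p) - Real.log p) := by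
  have hp0 := hp.1
  have hp2 := hp.2
  have hA := mgl_log_ineq (s := 1 - 2*p) ⟨by linarith, by linarith⟩
  have e1 : Real.log (1 + (1 - 2*p)) = Real.log 2 + Real.log (1 - p) := by
    rw [show (1:ℝ) + (1 - 2*p) = 2 * (1 - p) by ring,
      Real.log_mul two_ne_zero (by linarith : (1:ℝ) - p ≠ 0)]
  have e2 : Real.log (1 - (1 - 2*p)) = Real.log 2 + Real.log p := by
    rw [show (1:ℝ) - (1 - 2*p) = 2 * p by ring, Real.log_mul two_ne_zero hp0.ne']
  rw [e1, e2] at hA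
  have hA' : 2*(1 - 2*p) ≤ Real.log (1 - p) - Real.log p := by linarith
  have h12 : (0:ℝ) ≤ 1 - 2*p := by linarith
  nlinarith [mul_le_mul_of_nonneg_left hA'
      (by nlinarith [sq_nonneg p] : (0:ℝ) ≤ 1 - 2*p + 2*p^2),
    mul_nonneg (mul_nonneg h12 h12) h12]

private lemma mgl_hfun_hasDeriv {p : ℝ} (hp : p ∈ Ioo (0:ℝ) (1/2)) :
    HasDerivAt (fun p => p * (1-p) * (Real.log (1-p) - Real.log p) / (1 - 2*p))
      (((1 - 2*p + 2*p^2) * (Real.log (1-p) - Real.log p) - (1 - 2*p)) / (1 - 2*p)^2) p := by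
  have hp0 := hp.1
  have hp2 := hp.2
  have h1p : (0:ℝ) < 1 - p := by linarith
  have h12 : (0:ℝ) < 1 - 2*p := by linarith
  have hN1 : HasDerivAt (fun p : ℝ => p * (1-p)) (1 * (1-p) + p * (-1)) p :=
    (hasDerivAt_id p).mul ((hasDerivAt_id p).const_sub 1)
  have hL : HasDerivAt (fun p : ℝ => Real.log (1-p) - Real.log p) ((-1)/(1-p) - p⁻¹) p := by
    have hl1 : HasDerivAt (fun p : ℝ => Real.log (1-p)) ((-1)/(1-p)) p := by
      have := ((hasDerivAt_id p).const_sub 1).log h1p.ne'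
      simpa using this
    exact hl1.sub (Real.hasDerivAt_log hp0.ne')
  have hN := hN1.mul hL
  have hD : HasDerivAt (fun p : ℝ => 1 - 2*p) (-(2*1)) p :=
    ((hasDerivAt_id p).const_mul 2).const_sub 1
  have hdiv := hN.div hD h12.ne'
  refine hdiv.congr_deriv ?_
  simp only [Pi.mul_apply]
  field_simp
  ring

private lemma mgl_hfun_mono :
    MonotoneOn (fun p => p * (1-p) * (Real.log (1-p) - Real.log p) / (1 - 2*p))
      (Ioo (0:ℝ) (1/2)) := by
  apply monotoneOn_of_deriv_nonneg (convex_Ioo 0 (1/2))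
  · exact fun p hp => (mgl_hfun_hasDeriv hp).continuousAt.continuousWithinAt
  · rw [interior_Ioo]
    exact fun p hp => (mgl_hfun_hasDeriv hp).differentiableAt.differentiableWithinAt
  · rw [interior_Ioo]
    intro p hp
    rw [(mgl_hfun_hasDeriv hp).deriv]
    have hkey := mgl_keyB hp
    have h12 : (0:ℝ) < 1 - 2*p := by linarith [hp.2]
    apply div_nonneg (by linarith) (by positivity)

private lemma mgl_q_mem {ε t : ℝ} (hε0 : 0 ≤ ε) (hε1 : ε ≤ 1/2) (ht : t ∈ Ioo (0:ℝ) (1/2)) :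
    0 < (1-2*ε)*t + ε ∧ (1-2*ε)*t + ε ≤ 1/2 := by
  have ht0 := ht.1
  have ht2 := ht.2
  constructor
  · nlinarith [mul_nonneg hε0 (by linarith : (0:ℝ) ≤ 1 - 2*t)]
  · nlinarith [mul_nonneg (by linarith : (0:ℝ) ≤ 1 - 2*ε) (by linarith : (0:ℝ) ≤ 1/2 - t)]

private lemma mgl_keyD {ε : ℝ} (hε0 : 0 ≤ ε) (hε1 : ε ≤ 1/2) {t : ℝ}
    (ht : t ∈ Ioo (0:ℝ) (1/2)) :
    (1 - 2*ε) * (t * (1-t) * (Real.log (1-t) - Real.log t)) ≤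
      ((1-2*ε)*t + ε) * (1 - ((1-2*ε)*t + ε)) *
        (Real.log (1 - ((1-2*ε)*t + ε)) - Real.log ((1-2*ε)*t + ε)) := by
  rcases eq_or_lt_of_le hε1 with h | h
  · rw [h]
    norm_num
  · have ht0 := ht.1
    have ht2 := ht.2
    have hα : (0:ℝ) < 1 - 2*ε := by linarith
    have htq : t ≤ (1-2*ε)*t + ε := by
      nlinarith [mul_nonneg hε0 (by linarith : (0:ℝ) ≤ 1 - 2*t)]
    have hq2 : (1-2*ε)*t + ε < 1/2 := by nlinarith [mul_pos hα (by linarith : (0:ℝ) < 1/2 - t)]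
    have hq0 : (0:ℝ) < (1-2*ε)*t + ε := (mgl_q_mem hε0 hε1 ht).1
    have hm := mgl_hfun_mono ⟨ht0, ht2⟩ ⟨hq0, hq2⟩ htq
    simp only at hm
    have h12t : (0:ℝ) < 1 - 2*t := by linarith
    have h12q : (0:ℝ) < 1 - 2*((1-2*ε)*t + ε) := by nlinarith
    rw [div_le_div_iff₀ h12t h12q] at hm
    nlinarith [hm, h12t]

private lemma mgl_mgr_hasDeriv {ε : ℝ} (hε0 : 0 ≤ ε) (hε1 : ε ≤ 1/2) {t : ℝ}
    (ht : t ∈ Ioo (0:ℝ) (1/2)) :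
    HasDerivAt (fun t => (1-2*ε) *
        (Real.log (1 - ((1-2*ε)*t+ε)) - Real.log ((1-2*ε)*t+ε)) /
        (Real.log (1-t) - Real.log t))
      ((1-2*ε) * ((((1-2*ε)*t+ε) * (1 - ((1-2*ε)*t+ε)) *
          (Real.log (1 - ((1-2*ε)*t+ε)) - Real.log ((1-2*ε)*t+ε)))
        - (1-2*ε) * (t*(1-t)*(Real.log (1-t) - Real.log t)))
        / ((t*(1-t)) * ((((1-2*ε)*t+ε)) * (1 - ((1-2*ε)*t+ε)))
            * (Real.log (1-t) - Real.log t)^2)) t := by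
  have ht0 := ht.1
  have ht2 := ht.2
  have h1t : (0:ℝ) < 1 - t := by linarith
  have hq0 : (0:ℝ) < (1-2*ε)*t+ε := (mgl_q_mem hε0 hε1 ht).1
  have hq2 : (1-2*ε)*t+ε ≤ 1/2 := (mgl_q_mem hε0 hε1 ht).2
  have h1q : (0:ℝ) < 1 - ((1-2*ε)*t+ε) := by linarith
  have hLt : (0:ℝ) < Real.log (1-t) - Real.log t := by
    have := Real.log_lt_log ht0 (by linarith : t < 1 - t)
    linarith
  have hw : HasDerivAt (fun t : ℝ => (1-2*ε)*t+ε) ((1-2*ε)*1) t :=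
    ((hasDerivAt_id t).const_mul (1-2*ε)).add_const ε
  have hl1 : HasDerivAt (fun t : ℝ => Real.log (1 - ((1-2*ε)*t+ε)))
      ((-((1-2*ε)*1)) / (1 - ((1-2*ε)*t+ε))) t :=
    (hw.const_sub 1).log h1q.ne'
  have hl2 : HasDerivAt (fun t : ℝ => Real.log ((1-2*ε)*t+ε))
      (((1-2*ε)*1) / ((1-2*ε)*t+ε)) t :=
    hw.log hq0.ne'
  have hA : HasDerivAt (fun t : ℝ => (1-2*ε) *
      (Real.log (1 - ((1-2*ε)*t+ε)) - Real.log ((1-2*ε)*t+ε)))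
      ((1-2*ε) * (((-((1-2*ε)*1)) / (1 - ((1-2*ε)*t+ε))) - ((1-2*ε)*1) / ((1-2*ε)*t+ε))) t :=
    (hl1.sub hl2).const_mul _
  have hB : HasDerivAt (fun t : ℝ => Real.log (1-t) - Real.log t) ((-1)/(1-t) - t⁻¹) t := by
    have hb1 : HasDerivAt (fun t : ℝ => Real.log (1-t)) ((-1)/(1-t)) t := by
      have := ((hasDerivAt_id t).const_sub 1).log h1t.ne'
      simpa using this
    exact hb1.sub (Real.hasDerivAt_log ht0.ne')
  have hdiv := hA.div hB hLt.ne'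
  refine hdiv.congr_deriv ?_
  field_simp
  ring

private lemma mgl_mgr_mono {ε : ℝ} (hε0 : 0 ≤ ε) (hε1 : ε ≤ 1/2) :
    MonotoneOn (fun t => (1-2*ε) *
        (Real.log (1 - ((1-2*ε)*t+ε)) - Real.log ((1-2*ε)*t+ε)) /
        (Real.log (1-t) - Real.log t)) (Ioo (0:ℝ) (1/2)) := by
  apply monotoneOn_of_deriv_nonneg (convex_Ioo 0 (1/2))
  · exact fun t ht => (mgl_mgr_hasDeriv hε0 hε1 ht).continuousAt.continuousWithinAt
  · rw [interior_Ioo]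
    exact fun t ht => (mgl_mgr_hasDeriv hε0 hε1 ht).differentiableAt.differentiableWithinAt
  · rw [interior_Ioo]
    intro t ht
    rw [(mgl_mgr_hasDeriv hε0 hε1 ht).deriv]
    have ht0 := ht.1
    have ht2 := ht.2
    have h1t : (0:ℝ) < 1 - t := by linarith
    have hq0 : (0:ℝ) < (1-2*ε)*t+ε := (mgl_q_mem hε0 hε1 ht).1
    have hq2 : (1-2*ε)*t+ε ≤ 1/2 := (mgl_q_mem hε0 hε1 ht).2
    have h1q : (0:ℝ) < 1 - ((1-2*ε)*t+ε) := by linarith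
    apply div_nonneg
    · apply mul_nonneg (by linarith)
      have := mgl_keyD hε0 hε1 ht
      linarith
    · apply mul_nonneg (mul_nonneg (by positivity) (by positivity)) (sq_nonneg _)

private lemma mgl_phi_hasDeriv {ε : ℝ} (hε0 : 0 ≤ ε) (hε1 : ε ≤ 1/2) {x : ℝ}
    (hx : x ∈ Ioo (0:ℝ) 1) :
    HasDerivAt (fun x => phi x ε)
      ((1-2*ε) * (Real.log (1 - ((1-2*ε)*(H2inv (1-x))+ε)) -
          Real.log ((1-2*ε)*(H2inv (1-x))+ε)) /
        (Real.log (1-(H2inv (1-x))) - Real.log (H2inv (1-x)))) x := by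
  have hx1 : (1 - x) ∈ Ioo (0:ℝ) 1 := ⟨by linarith [hx.2], by linarith [hx.1]⟩
  have ht := mgl_H2inv_mem_open hx1
  have hq0 : (0:ℝ) < (1-2*ε)*(H2inv (1-x))+ε := (mgl_q_mem hε0 hε1 ht).1
  have hq2 : (1-2*ε)*(H2inv (1-x))+ε ≤ 1/2 := (mgl_q_mem hε0 hε1 ht).2
  have hLt : (0:ℝ) < Real.log (1-(H2inv (1-x))) - Real.log (H2inv (1-x)) := by
    have := Real.log_lt_log ht.1 (by linarith [ht.2] : H2inv (1-x) < 1 - H2inv (1-x))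
    linarith
  have h1 : HasDerivAt (fun x : ℝ => 1 - x) (-1) x := by
    have := (hasDerivAt_id x).const_sub 1
    simpa using this
  have h2 := (mgl_H2inv_hasDeriv hx1).comp x h1
  have h3 := (h2.const_mul (1-2*ε)).add_const ε
  have h4 := (mgl_H2_hasDeriv hq0.ne' (by linarith : (1-2*ε)*(H2inv (1-x))+ε ≠ 1)).comp x h3
  have h5 := h4.const_sub 1
  have hphi : (fun x => phi x ε) = fun x =>
      1 - H2 ((1 - 2 * ε) * H2inv (1 - x) + ε) := by
    funext y; rfl
  rw [hphi]
  refine h5.congr_deriv ?_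
  field_simp

end MrsGerberAux

/-- Mrs. Gerber's function `x ↦ φ(x,ε)` is concave on `[0,1]`. -/
theorem stmt1 (ε : ℝ) (hε0 : 0 ≤ ε) (hε1 : ε ≤ 1 / 2) :
    ConcaveOn ℝ (Set.Icc (0 : ℝ) 1) (fun x => phi x ε) := by
  have hε1' : ε ≤ 1/2 := hε1
  have hcont : ContinuousOn (fun x => phi x ε) (Set.Icc (0:ℝ) 1) := by
    have hmap : Set.MapsTo (fun x : ℝ => 1 - x) (Set.Icc (0:ℝ) 1) (Set.Icc (0:ℝ) 1) := by
      intro x hx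
      simp only [Set.mem_Icc] at hx ⊢
      exact ⟨by linarith [hx.2], by linarith [hx.1]⟩
    have c1 : ContinuousOn (fun x : ℝ => H2inv (1 - x)) (Set.Icc (0:ℝ) 1) :=
      mgl_H2inv_contOn.comp (continuousOn_const.sub continuousOn_id) hmap
    have c2 : ContinuousOn (fun x : ℝ => (1 - 2 * ε) * H2inv (1 - x) + ε)
        (Set.Icc (0:ℝ) 1) := (continuousOn_const.mul c1).add continuousOn_const
    have c3 := mgl_H2_cont.comp_continuousOn c2
    have c4 : ContinuousOn (fun x : ℝ => 1 - H2 ((1 - 2 * ε) * H2inv (1 - x) + ε))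
        (Set.Icc (0:ℝ) 1) := continuousOn_const.sub c3
    exact c4
  have hdiff : DifferentiableOn ℝ (fun x => phi x ε) (interior (Set.Icc (0:ℝ) 1)) := by
    rw [interior_Icc]
    exact fun x hx => (mgl_phi_hasDeriv hε0 hε1' hx).differentiableAt.differentiableWithinAt
  have hanti : AntitoneOn (deriv (fun x => phi x ε)) (interior (Set.Icc (0:ℝ) 1)) := by
    rw [interior_Icc]
    intro x1 h1 x2 h2 h12
    rw [(mgl_phi_hasDeriv hε0 hε1' h1).deriv, (mgl_phi_hasDeriv hε0 hε1' h2).deriv]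
    have hx1 : (1 - x1) ∈ Set.Ioo (0:ℝ) 1 := ⟨by linarith [h1.2], by linarith [h1.1]⟩
    have hx2 : (1 - x2) ∈ Set.Ioo (0:ℝ) 1 := ⟨by linarith [h2.2], by linarith [h2.1]⟩
    have ht1 := mgl_H2inv_mem_open hx1
    have ht2 := mgl_H2inv_mem_open hx2
    have hle : H2inv (1 - x2) ≤ H2inv (1 - x1) :=
      mgl_H2inv_smono.monotoneOn (Set.Ioo_subset_Icc_self hx2) (Set.Ioo_subset_Icc_self hx1)
        (by linarith)
    exact mgl_mgr_mono hε0 hε1' ht2 ht1 hle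
  exact hanti.concaveOn_of_deriv (convex_Icc 0 1) hcont hdiff
end

section
/- (Mrs. Gerber's lemma.) Let 0 ≤ ε ≤ 1/2 and let f : {0,1}^n → ℝ be a nonnegative function with E_x f > 0. Then Ent(T_ε f) ≤ n·(E_x f)·φ(Ent(f)/(n·E_x f), ε). -/
open Finset

namespace MGLaux
open Real Set

lemma H2_eq (x : ℝ) : H2 x = Real.binEntropy x / Real.log 2 := by
  unfold H2 Real.binEntropy
  simp only [Real.logb, Real.log_inv]
  ring

lemma H2_fun_eq : H2 = fun x => Real.binEntropy x / Real.log 2 := funext H2_eq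

lemma H2_zero : H2 0 = 0 := by simp [H2]

lemma H2_one : H2 1 = 0 := by simp [H2]

lemma H2_half : H2 (1/2) = 1 := by
  rw [H2_eq, show (1:ℝ)/2 = 2⁻¹ from one_div 2, Real.binEntropy_two_inv]
  exact div_self (ne_of_gt (Real.log_pos one_lt_two))

lemma H2_symm (x : ℝ) : H2 (1 - x) = H2 x := by
  rw [H2_eq, H2_eq, Real.binEntropy_one_sub]

lemma H2_nonneg {x : ℝ} (hx : x ∈ Icc (0:ℝ) 1) : 0 ≤ H2 x := by
  rw [H2_eq]
  exact div_nonneg (Real.binEntropy_nonneg hx.1 hx.2) (Real.log_nonneg one_le_two)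

lemma H2_le_one (x : ℝ) : H2 x ≤ 1 := by
  rw [H2_eq]
  exact (div_le_one (Real.log_pos one_lt_two)).mpr Real.binEntropy_le_log_two

lemma H2_cont : Continuous H2 := by
  rw [H2_fun_eq]; exact Real.binEntropy_continuous.div_const _

lemma H2_smono : StrictMonoOn H2 (Icc (0:ℝ) (1/2)) := by
  intro a ha b hb hab
  rw [H2_eq, H2_eq]
  have h : Real.binEntropy a < Real.binEntropy b := by
    refine Real.binEntropy_strictMonoOn ?_ ?_ hab
    · rwa [show ((2:ℝ)⁻¹) = 1/2 from (one_div 2).symm]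
    · rwa [show ((2:ℝ)⁻¹) = 1/2 from (one_div 2).symm]
  gcongr

lemma H2_concave : ConcaveOn ℝ (Icc (0:ℝ) 1) H2 := by
  have h := Real.strictConcave_binEntropy.concaveOn.smul
    (c := (Real.log 2)⁻¹) (by positivity)
  have he : H2 = (Real.log 2)⁻¹ • Real.binEntropy := by
    funext x; rw [H2_eq, Pi.smul_apply, smul_eq_mul]; ring
  rw [he]; exact h

lemma H2_hasDerivAt {p : ℝ} (h0 : p ≠ 0) (h1 : p ≠ 1) :
    HasDerivAt H2 ((Real.log (1 - p) - Real.log p) / Real.log 2) p := by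
  rw [H2_fun_eq]
  exact (Real.hasDerivAt_binEntropy h0 h1).div_const _

lemma H2_surj {y : ℝ} (hy : y ∈ Icc (0:ℝ) 1) : ∃ a ∈ Icc (0:ℝ) (1/2), H2 a = y := by
  have h := intermediate_value_Icc (by norm_num : (0:ℝ) ≤ 1/2) H2_cont.continuousOn
  rw [H2_zero, H2_half] at h
  obtain ⟨a, ha, hae⟩ := h hy
  exact ⟨a, ha, hae⟩

lemma H2_H2inv {y : ℝ} (hy : y ∈ Icc (0:ℝ) 1) : H2 (H2inv y) = y := by
  unfold H2inv
  exact Function.invFunOn_eq (H2_surj hy)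

lemma H2inv_mem {y : ℝ} (hy : y ∈ Icc (0:ℝ) 1) : H2inv y ∈ Icc (0:ℝ) (1/2) := by
  unfold H2inv
  exact Function.invFunOn_mem (H2_surj hy)

lemma H2inv_H2 {a : ℝ} (ha : a ∈ Icc (0:ℝ) (1/2)) : H2inv (H2 a) = a := by
  unfold H2inv
  exact H2_smono.injOn.leftInvOn_invFunOn ha

lemma H2inv_zero : H2inv 0 = 0 := by
  have h := H2inv_H2 (a := 0) (by constructor <;> norm_num)
  rwa [H2_zero] at h

lemma H2inv_one : H2inv 1 = 1/2 := by
  have h := H2inv_H2 (a := 1/2) (by constructor <;> norm_num)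
  rwa [H2_half] at h

lemma H2inv_mono : MonotoneOn H2inv (Icc (0:ℝ) 1) := by
  intro y1 h1 y2 h2 h12
  by_contra hc
  push_neg at hc
  have := H2_smono (H2inv_mem h2) (H2inv_mem h1) hc
  rw [H2_H2inv h1, H2_H2inv h2] at this
  exact absurd h12 (not_le.mpr this)

lemma H2inv_image : H2inv '' (Icc (0:ℝ) 1) = Icc (0:ℝ) (1/2) := by
  apply Set.Subset.antisymm
  · rintro _ ⟨y, hy, rfl⟩; exact H2inv_mem hy
  · intro a ha
    exact ⟨H2 a, ⟨H2_nonneg ⟨ha.1, ha.2.trans (by norm_num)⟩, H2_le_one a⟩, H2inv_H2 ha⟩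

lemma H2inv_mem_Ioo {y : ℝ} (hy : y ∈ Ioo (0:ℝ) 1) : H2inv y ∈ Ioo (0:ℝ) (1/2) := by
  have hyI : y ∈ Icc (0:ℝ) 1 := Ioo_subset_Icc_self hy
  have hm := H2inv_mem hyI
  constructor
  · rcases lt_or_eq_of_le hm.1 with h | h
    · exact h
    · exfalso
      have : H2 (H2inv y) = H2 0 := by rw [← h]
      rw [H2_H2inv hyI, H2_zero] at this
      exact absurd this (ne_of_gt hy.1)
  · rcases lt_or_eq_of_le hm.2 with h | h
    · exact h
    · exfalso
      have : H2 (H2inv y) = H2 (1/2) := by rw [h]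
      rw [H2_H2inv hyI, H2_half] at this
      exact absurd this (ne_of_lt hy.2)

lemma H2inv_contOn : ContinuousOn H2inv (Icc (0:ℝ) 1) := by
  intro y hy
  rcases eq_or_lt_of_le hy.1 with h0 | h0
  · have h := continuousWithinAt_right_of_monotoneOn_of_image_mem_nhdsWithin H2inv_mono
      (Icc_mem_nhdsGE_of_mem (by constructor <;> norm_num : (0:ℝ) ∈ Ico (0:ℝ) 1))
      (by rw [H2inv_image, H2inv_zero]
          exact Icc_mem_nhdsGE_of_mem (by constructor <;> norm_num))
    rw [← h0]
    exact h.mono Icc_subset_Ici_self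
  rcases eq_or_lt_of_le hy.2 with h1 | h1
  · have h := continuousWithinAt_left_of_monotoneOn_of_image_mem_nhdsWithin H2inv_mono
      (Icc_mem_nhdsLE_of_mem (by constructor <;> norm_num : (1:ℝ) ∈ Ioc (0:ℝ) 1))
      (by rw [H2inv_image, H2inv_one]
          exact Icc_mem_nhdsLE_of_mem (by constructor <;> norm_num))
    rw [h1]
    exact h.mono Icc_subset_Iic_self
  · have hmem : H2inv y ∈ Ioo (0:ℝ) (1/2) := H2inv_mem_Ioo ⟨h0, h1⟩
    exact (continuousAt_of_monotoneOn_of_image_mem_nhds H2inv_mono (Icc_mem_nhds h0 h1)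
      (by rw [H2inv_image]; exact Icc_mem_nhds hmem.1 hmem.2)).continuousWithinAt

noncomputable def ell (t : ℝ) : ℝ := Real.log (1 - t) - Real.log t

lemma ell_pos {t : ℝ} (ht : t ∈ Ioo (0:ℝ) (1/2)) : 0 < ell t :=
  sub_pos.2 (Real.log_lt_log ht.1 (by linarith [ht.2]))

lemma ell_anti {t1 t2 : ℝ} (h1 : 0 < t1) (h2 : t2 < 1) (h12 : t1 ≤ t2) : ell t2 ≤ ell t1 := by
  unfold ell
  have := Real.log_le_log (by linarith : (0:ℝ) < 1 - t2) (by linarith : 1 - t2 ≤ 1 - t1)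
  have := Real.log_le_log h1 h12
  linarith

lemma hasDerivAt_ell {t : ℝ} (h0 : 0 < t) (h1 : t < 1) :
    HasDerivAt ell (-(1-t)⁻¹ - t⁻¹) t := by
  have hid : HasDerivAt (fun t : ℝ => 1 - t) (-1) t := (hasDerivAt_id t).const_sub 1
  have h2' : HasDerivAt (fun t : ℝ => Real.log (1 - t)) ((1-t)⁻¹ * (-1)) t :=
    (Real.hasDerivAt_log (by linarith)).comp t hid
  have h3' : HasDerivAt Real.log t⁻¹ t := Real.hasDerivAt_log (ne_of_gt h0)
  have h := h2'.sub h3'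
  refine h.congr_deriv ?_
  ring

noncomputable def Fc (t : ℝ) : ℝ := (1 - t) * Real.negMulLog t - t * Real.negMulLog (1 - t)

lemma Fc_eq {t : ℝ} : Fc t = t * (1 - t) * ell t := by
  unfold Fc ell Real.negMulLog; ring

lemma Fc_half : Fc (1/2) = 0 := by unfold Fc; norm_num

lemma hasDerivAt_Fc {t : ℝ} (h0 : 0 < t) (h1 : t < 1) :
    HasDerivAt Fc ((1 - 2*t) * ell t - 1) t := by
  have hid : HasDerivAt (fun t : ℝ => 1 - t) (-1) t := (hasDerivAt_id t).const_sub 1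
  have hnm : HasDerivAt Real.negMulLog (-Real.log t - 1) t :=
    Real.hasDerivAt_negMulLog (ne_of_gt h0)
  have hnm2 : HasDerivAt (fun t : ℝ => Real.negMulLog (1 - t)) ((-Real.log (1-t) - 1) * (-1)) t :=
    (Real.hasDerivAt_negMulLog (by intro hc; linarith [hc] : (1:ℝ) - t ≠ 0)).comp t hid
  have hA : HasDerivAt (fun t : ℝ => (1 - t) * Real.negMulLog t)
      ((-1) * Real.negMulLog t + (1 - t) * (-Real.log t - 1)) t := hid.mul hnm
  have hB : HasDerivAt (fun t : ℝ => t * Real.negMulLog (1 - t))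
      (1 * Real.negMulLog (1-t) + t * ((-Real.log (1-t) - 1) * (-1))) t :=
    (hasDerivAt_id t).mul hnm2
  have h := hA.sub hB
  refine h.congr_deriv ?_
  unfold Real.negMulLog ell
  ring

lemma Fc_concave : ConcaveOn ℝ (Icc (0:ℝ) (1/2)) Fc := by
  apply AntitoneOn.concaveOn_of_deriv (convex_Icc _ _)
  · apply Continuous.continuousOn
    unfold Fc
    fun_prop
  · rw [interior_Icc]
    intro t ht
    exact (hasDerivAt_Fc ht.1 (by linarith [ht.2])).differentiableAt.differentiableWithinAt
  · rw [interior_Icc]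
    intro t1 h1 t2 h2 h12
    rw [(hasDerivAt_Fc h2.1 (by linarith [h2.2])).deriv,
        (hasDerivAt_Fc h1.1 (by linarith [h1.2])).deriv]
    have l2 : 0 ≤ ell t2 := le_of_lt (ell_pos h2)
    have l12 : ell t2 ≤ ell t1 := ell_anti h1.1 (by linarith [h2.2]) h12
    apply sub_le_sub_right
    apply mul_le_mul (by linarith) l12 l2 (by linarith [h1.2])

lemma Fc_ge {ε a : ℝ} (hε0 : 0 ≤ ε) (hε1 : ε ≤ 1/2) (ha : a ∈ Icc (0:ℝ) (1/2)) :
    (1 - 2*ε) * Fc a ≤ Fc ((1 - 2*ε) * a + ε) := by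
  have hhalf : (1:ℝ)/2 ∈ Icc (0:ℝ) (1/2) := by constructor <;> norm_num
  have h := Fc_concave.2 ha hhalf (by linarith : (0:ℝ) ≤ 1 - 2*ε)
    (by linarith : (0:ℝ) ≤ 2*ε) (by ring)
  rw [smul_eq_mul, smul_eq_mul, smul_eq_mul, smul_eq_mul, Fc_half] at h
  have harg : (1 - 2*ε) * a + 2*ε * (1/2) = (1 - 2*ε) * a + ε := by ring
  rw [harg] at h
  linarith

noncomputable def psi (ε a : ℝ) : ℝ := ell ((1 - 2*ε) * a + ε) / ell a

lemma hasDerivAt_psi {ε a : ℝ} (hε0 : 0 ≤ ε) (hε1 : ε < 1/2) (ha : a ∈ Ioo (0:ℝ) (1/2)) :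
    HasDerivAt (psi ε)
      (((-(1 - ((1-2*ε)*a+ε))⁻¹ - ((1-2*ε)*a+ε)⁻¹) * (1-2*ε) * ell a -
        ell ((1-2*ε)*a+ε) * (-(1-a)⁻¹ - a⁻¹)) / (ell a)^2) a := by
  have hb0 : 0 < (1-2*ε)*a + ε := by nlinarith [ha.1, ha.2]
  have hbh : (1-2*ε)*a + ε < 1/2 := by nlinarith [ha.2]
  have haff : HasDerivAt (fun a : ℝ => (1-2*ε)*a + ε) (1-2*ε) a := by
    simpa using ((hasDerivAt_id a).const_mul (1-2*ε)).add_const ε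
  have hnum : HasDerivAt (fun a : ℝ => ell ((1-2*ε)*a + ε))
      ((-(1 - ((1-2*ε)*a+ε))⁻¹ - ((1-2*ε)*a+ε)⁻¹) * (1-2*ε)) a :=
    by have := (hasDerivAt_ell hb0 (by linarith)).comp a haff; exact this
  have hden := hasDerivAt_ell ha.1 (by linarith [ha.2])
  have hne : ell a ≠ 0 := ne_of_gt (ell_pos ha)
  exact hnum.div hden hne

lemma psi_mono {ε : ℝ} (hε0 : 0 ≤ ε) (hε1 : ε < 1/2) :
    MonotoneOn (psi ε) (Ioo (0:ℝ) (1/2)) := by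
  apply monotoneOn_of_deriv_nonneg (convex_Ioo _ _)
  · intro a ha
    exact (hasDerivAt_psi hε0 hε1 ha).differentiableAt.continuousAt.continuousWithinAt
  · rw [interior_Ioo]
    intro a ha
    exact (hasDerivAt_psi hε0 hε1 ha).differentiableAt.differentiableWithinAt
  · rw [interior_Ioo]
    intro a ha
    rw [(hasDerivAt_psi hε0 hε1 ha).deriv]
    apply div_nonneg _ (sq_nonneg _)
    have hb0 : 0 < (1-2*ε)*a + ε := by nlinarith [ha.1, ha.2]
    have hbh : (1-2*ε)*a + ε < 1/2 := by nlinarith [ha.2]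
    have key : (1-2*ε) * Fc a ≤ Fc ((1-2*ε)*a + ε) :=
      Fc_ge hε0 (le_of_lt hε1) (Ioo_subset_Icc_self ha)
    rw [Fc_eq, Fc_eq] at key
    have ha0 := ha.1
    have ha2 : a < 1/2 := ha.2
    have h1a : 0 < 1 - a := by linarith
    have h1b : 0 < 1 - ((1-2*ε)*a + ε) := by linarith
    have expand : (-(1 - ((1-2*ε)*a+ε))⁻¹ - ((1-2*ε)*a+ε)⁻¹) * (1-2*ε) * ell a -
        ell ((1-2*ε)*a+ε) * (-(1-a)⁻¹ - a⁻¹)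
        = (((1-2*ε)*a+ε) * (1 - ((1-2*ε)*a+ε)) * ell ((1-2*ε)*a+ε)
            - (1-2*ε) * (a * (1-a) * ell a)) / (a * (1-a) * (((1-2*ε)*a+ε) * (1 - ((1-2*ε)*a+ε)))) := by
      field_simp
      ring
    rw [expand]
    apply div_nonneg (by linarith)
    positivity

noncomputable def Gf (ε : ℝ) (h : ℝ) : ℝ := H2 ((1 - 2*ε) * H2inv h + ε)

lemma H2inv_hasDerivAt {y : ℝ} (hy : y ∈ Ioo (0:ℝ) 1) :
    HasDerivAt H2inv ((ell (H2inv y) / Real.log 2)⁻¹) y := by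
  have haI : H2inv y ∈ Ioo (0:ℝ) (1/2) := H2inv_mem_Ioo hy
  have hd : HasDerivAt H2 (ell (H2inv y) / Real.log 2) (H2inv y) :=
    H2_hasDerivAt (ne_of_gt haI.1) (by intro hc; rw [hc] at haI; linarith [haI.2])
  apply HasDerivAt.of_local_left_inverse
    (H2inv_contOn.continuousAt (Icc_mem_nhds hy.1 hy.2)) hd
    (ne_of_gt (div_pos (ell_pos haI) (Real.log_pos one_lt_two)))
  filter_upwards [Ioo_mem_nhds hy.1 hy.2] with z hz
  exact H2_H2inv (Ioo_subset_Icc_self hz)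

lemma hasDerivAt_Gf {ε y : ℝ} (hε0 : 0 ≤ ε) (hε1 : ε < 1/2) (hy : y ∈ Ioo (0:ℝ) 1) :
    HasDerivAt (Gf ε) ((1-2*ε) * psi ε (H2inv y)) y := by
  have haI : H2inv y ∈ Ioo (0:ℝ) (1/2) := H2inv_mem_Ioo hy
  have hb0 : 0 < (1-2*ε) * H2inv y + ε := by nlinarith [haI.1, haI.2]
  have hbh : (1-2*ε) * H2inv y + ε < 1/2 := by nlinarith [haI.2]
  have hinv := H2inv_hasDerivAt hy
  have haff : HasDerivAt (fun h : ℝ => (1-2*ε) * H2inv h + ε)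
      ((1-2*ε) * (ell (H2inv y) / Real.log 2)⁻¹) y :=
    (hinv.const_mul (1-2*ε)).add_const ε
  have hH2 : HasDerivAt H2 (ell ((1-2*ε) * H2inv y + ε) / Real.log 2) ((1-2*ε) * H2inv y + ε) :=
    H2_hasDerivAt (ne_of_gt hb0) (by intro hc; rw [hc] at hbh; linarith)
  have h := hH2.comp y haff
  have hfn : (H2 ∘ fun h : ℝ => (1-2*ε) * H2inv h + ε) = Gf ε := rfl
  rw [hfn] at h
  refine h.congr_deriv ?_
  unfold psi
  have hla : ell (H2inv y) ≠ 0 := ne_of_gt (ell_pos haI)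
  have hl2 : Real.log 2 ≠ 0 := ne_of_gt (Real.log_pos one_lt_two)
  field_simp

lemma Gf_contOn {ε : ℝ} : ContinuousOn (Gf ε) (Icc (0:ℝ) 1) := by
  apply H2_cont.comp_continuousOn
  exact (continuousOn_const.mul H2inv_contOn).add continuousOn_const

lemma Gf_convex {ε : ℝ} (hε0 : 0 ≤ ε) (hε1 : ε ≤ 1/2) :
    ConvexOn ℝ (Icc (0:ℝ) 1) (Gf ε) := by
  rcases lt_or_eq_of_le hε1 with hlt | heq
  · apply MonotoneOn.convexOn_of_deriv (convex_Icc 0 1) Gf_contOn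
    · rw [interior_Icc]
      intro y hy
      exact (hasDerivAt_Gf hε0 hlt hy).differentiableAt.differentiableWithinAt
    · rw [interior_Icc]
      intro y1 h1 y2 h2 h12
      rw [(hasDerivAt_Gf hε0 hlt h1).deriv, (hasDerivAt_Gf hε0 hlt h2).deriv]
      apply mul_le_mul_of_nonneg_left _ (by linarith : (0:ℝ) ≤ 1-2*ε)
      exact psi_mono hε0 hlt (H2inv_mem_Ioo h1) (H2inv_mem_Ioo h2)
        (H2inv_mono (Ioo_subset_Icc_self h1) (Ioo_subset_Icc_self h2) h12)
  · have hg : Gf ε = fun _ => 1 := by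
      funext h
      unfold Gf
      rw [heq]
      rw [show (1:ℝ) - 2*(1/2) = 0 by norm_num, zero_mul, zero_add, H2_half]
    rw [hg]
    exact convexOn_const 1 (convex_Icc 0 1)

lemma Gf_H2 {ε q : ℝ} (hε0 : 0 ≤ ε) (hε1 : ε ≤ 1/2) (hq : q ∈ Icc (0:ℝ) 1) :
    Gf ε (H2 q) = H2 ((1-2*ε)*q + ε) := by
  rcases le_or_gt q (1/2) with h | h
  · unfold Gf
    rw [H2inv_H2 ⟨hq.1, h⟩]
  · unfold Gf
    rw [← H2_symm q, H2inv_H2 ⟨by linarith [hq.2], by linarith⟩]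
    rw [show (1-2*ε) * (1 - q) + ε = 1 - ((1-2*ε)*q + ε) by ring, H2_symm]


noncomputable def shE {α : Type*} [Fintype α] (p : α → ℝ) : ℝ :=
  -∑ a, p a * Real.logb 2 (p a)

lemma chain_term {A B : ℝ} (hA : 0 ≤ A) (hB : 0 ≤ B) :
    -(A * Real.logb 2 A) - B * Real.logb 2 B
      = -((A+B) * Real.logb 2 (A+B)) + (A+B) * H2 (A/(A+B)) := by
  rcases eq_or_lt_of_le hA with hA0 | hA0
  · rcases eq_or_lt_of_le hB with hB0 | hB0
    · rw [← hA0, ← hB0]; simp [H2_zero]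
    · rw [← hA0]; simp [H2_zero]
  · rcases eq_or_lt_of_le hB with hB0 | hB0
    · rw [← hB0]; simp [div_self (ne_of_gt hA0), H2_one]
    · have hm : 0 < A + B := by linarith
      have h1 : 1 - A/(A+B) = B/(A+B) := by field_simp; ring
      unfold H2
      rw [h1, Real.logb_div (ne_of_gt hA0) (ne_of_gt hm),
        Real.logb_div (ne_of_gt hB0) (ne_of_gt hm)]
      field_simp
      ring

lemma shE_chain {α : Type*} [Fintype α] (R : Bool × α → ℝ) (h0 : ∀ z, 0 ≤ R z) :
    shE R = shE (fun y => R (true, y) + R (false, y))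
      + ∑ y, (R (true,y) + R (false,y)) * H2 (R (true,y) / (R (true,y) + R (false,y))) := by
  unfold shE
  rw [Fintype.sum_prod_type, Fintype.sum_bool]
  have e1 : (∑ y : α, R (true, y) * Real.logb 2 (R (true, y)))
      + ∑ y : α, R (false, y) * Real.logb 2 (R (false, y))
      = ∑ y : α, (R (true,y) * Real.logb 2 (R (true,y))
          + R (false,y) * Real.logb 2 (R (false,y))) := by
    rw [← Finset.sum_add_distrib]
  rw [e1]
  have e2 : -∑ y : α, (R (true,y) * Real.logb 2 (R (true,y))
      + R (false,y) * Real.logb 2 (R (false,y)))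
      = ∑ y : α, (-(R (true,y) * Real.logb 2 (R (true,y)))
          - R (false,y) * Real.logb 2 (R (false,y))) := by
    rw [← Finset.sum_neg_distrib]
    exact Finset.sum_congr rfl fun y _ => by ring
  rw [e2]
  have e3 : -∑ y : α, (R (true, y) + R (false, y)) * Real.logb 2 (R (true, y) + R (false, y))
      + ∑ y : α, (R (true,y) + R (false,y)) * H2 (R (true,y) / (R (true,y) + R (false,y)))
      = ∑ y : α, (-((R (true,y) + R (false,y)) * Real.logb 2 (R (true,y) + R (false,y)))
          + (R (true,y) + R (false,y)) * H2 (R (true,y) / (R (true,y) + R (false,y)))) := by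
    rw [← Finset.sum_neg_distrib, ← Finset.sum_add_distrib]
  rw [e3]
  exact Finset.sum_congr rfl fun y _ => chain_term (h0 _) (h0 _)

lemma div_mem_Icc {A B : ℝ} (hA : 0 ≤ A) (hB : 0 ≤ B) : A / (A + B) ∈ Set.Icc (0:ℝ) 1 := by
  rcases eq_or_lt_of_le (add_nonneg hA hB) with h | h
  · rw [← h, div_zero]; constructor <;> norm_num
  · constructor
    · exact div_nonneg hA (le_of_lt h)
    · rw [div_le_one h]; linarith

lemma marg_sum {α : Type*} [Fintype α] (P : Bool × α → ℝ) :
    ∑ y, (P (true,y) + P (false,y)) = ∑ z, P z := by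
  rw [Fintype.sum_prod_type, Fintype.sum_bool, Finset.sum_add_distrib]

lemma key {α : Type*} [Fintype α] {ε : ℝ} (hε0 : 0 ≤ ε) (hε1 : ε ≤ 1/2)
    (K : α → α → ℝ) (hK0 : ∀ x y, 0 ≤ K x y) (hK1 : ∀ y, ∑ x, K x y = 1)
    (P : Bool × α → ℝ) (hP0 : ∀ z, 0 ≤ P z) (hP1 : ∑ z, P z = 1)
    (w : α → ℝ) (hwdef : ∀ y, w y = P (true, y) + P (false, y))
    (Q : Bool × α → ℝ)
    (hQdef : ∀ z, Q z = ∑ y : Bool × α, (if z.1 = y.1 then (1:ℝ)-ε else ε) * K z.2 y.2 * P y) :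
    shE (fun x : α => ∑ y : α, K x y * w y) + Gf ε (shE P - shE w) ≤ shE Q := by
  classical
  set s : α → ℝ := fun y => (1-2*ε) * (P (true,y) / w y) + ε with hs
  set w' : α → ℝ := fun x => ∑ y : α, K x y * w y with hw'
  have hw0 : ∀ y, 0 ≤ w y := fun y => (hwdef y) ▸ add_nonneg (hP0 _) (hP0 _)
  have hw1 : ∑ y, w y = 1 := by
    rw [Finset.sum_congr rfl fun y _ => hwdef y, marg_sum P, hP1]
  have hqmem : ∀ y, P (true,y) / w y ∈ Set.Icc (0:ℝ) 1 := by
    intro y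
    rw [hwdef y]
    exact div_mem_Icc (hP0 _) (hP0 _)
  have hws : ∀ y, w y * s y = (1-ε) * P (true,y) + ε * P (false,y) := by
    intro y
    by_cases hwy : w y = 0
    · have h2 := (add_eq_zero_iff_of_nonneg (hP0 _) (hP0 _)).mp ((hwdef y) ▸ hwy)
      rw [hwy, zero_mul, h2.1, h2.2]; ring
    · simp only [hs]
      rw [hwdef y] at hwy ⊢
      field_simp
      ring
  have hws' : ∀ y, w y * (1 - s y) = ε * P (true,y) + (1-ε) * P (false,y) := by
    intro y
    have h := hws y
    rw [mul_sub, mul_one, h, hwdef y]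
    ring
  have hsy : ∀ y, s y ∈ Set.Icc (0:ℝ) 1 := by
    intro y
    have hq := hqmem y
    simp only [hs]
    constructor
    · exact add_nonneg (mul_nonneg (by linarith) hq.1) hε0
    · nlinarith [hq.2, hq.1]
  have hQt : ∀ x, Q (true, x) = ∑ y : α, K x y * (w y * s y) := by
    intro x
    rw [hQdef]
    rw [Fintype.sum_prod_type, Fintype.sum_bool]
    simp only [show ((true:Bool) = true) ↔ True from by simp,
      show ((true:Bool) = false) ↔ False from by simp,
      show ((false:Bool) = true) ↔ False from by simp,
      show ((false:Bool) = false) ↔ True from by simp, if_true, if_false]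
    rw [← Finset.sum_add_distrib]
    refine Finset.sum_congr rfl fun y _ => ?_
    rw [hws y]
    ring
  have hQf : ∀ x, Q (false, x) = ∑ y : α, K x y * (w y * (1 - s y)) := by
    intro x
    rw [hQdef]
    rw [Fintype.sum_prod_type, Fintype.sum_bool]
    simp only [show ((true:Bool) = true) ↔ True from by simp,
      show ((true:Bool) = false) ↔ False from by simp,
      show ((false:Bool) = true) ↔ False from by simp,
      show ((false:Bool) = false) ↔ True from by simp, if_true, if_false]
    rw [← Finset.sum_add_distrib]
    refine Finset.sum_congr rfl fun y _ => ?_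
    rw [hws' y]
    ring
  have hQsum : ∀ x, Q (true,x) + Q (false,x) = w' x := by
    intro x
    rw [hQt, hQf, ← Finset.sum_add_distrib]
    exact Finset.sum_congr rfl fun y _ => by ring
  have hQ0 : ∀ z, 0 ≤ Q z := by
    intro z
    rw [hQdef]
    apply Finset.sum_nonneg
    intro y _
    apply mul_nonneg (mul_nonneg _ (hK0 _ _)) (hP0 _)
    split_ifs <;> linarith
  have hw'0 : ∀ x, 0 ≤ w' x :=
    fun x => Finset.sum_nonneg fun y _ => mul_nonneg (hK0 x y) (hw0 y)
  have chainQ := shE_chain Q hQ0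
  simp only [hQsum] at chainQ
  have hJen : ∀ x, ∑ y : α, (K x y * w y) * H2 (s y) ≤ w' x * H2 (Q (true,x) / w' x) := by
    intro x
    rcases eq_or_lt_of_le (hw'0 x) with h | h
    · have hz := (Finset.sum_eq_zero_iff_of_nonneg
        (fun y (_ : y ∈ Finset.univ) => mul_nonneg (hK0 x y) (hw0 y))).mp h.symm
      rw [Finset.sum_congr rfl (fun y hy => by rw [hz y hy, zero_mul]), ← h]
      simp
    · have hwne : w' x ≠ 0 := ne_of_gt h
      have hJ := H2_concave.le_map_sum (t := Finset.univ)
        (w := fun y => K x y * w y / w' x) (p := s)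
        (fun y _ => div_nonneg (mul_nonneg (hK0 x y) (hw0 y)) (le_of_lt h))
        (by rw [← Finset.sum_div]; exact div_self hwne)
        (fun y _ => hsy y)
      have harg : ∑ y : α, (K x y * w y / w' x) • s y = Q (true,x) / w' x := by
        simp only [smul_eq_mul]
        rw [Finset.sum_congr rfl (fun y (_ : y ∈ Finset.univ) =>
          show K x y * w y / w' x * s y = (K x y * (w y * s y)) / w' x by ring),
          ← Finset.sum_div, ← hQt x]
      rw [harg] at hJ
      calc ∑ y : α, (K x y * w y) * H2 (s y)
          = w' x * ∑ y : α, (K x y * w y / w' x) • H2 (s y) := by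
            rw [Finset.mul_sum]
            refine Finset.sum_congr rfl fun y _ => ?_
            simp only [smul_eq_mul]
            field_simp
        _ ≤ w' x * H2 (Q (true,x)/w' x) := mul_le_mul_of_nonneg_left hJ (le_of_lt h)
  have step2 : ∑ y : α, w y * H2 (s y) ≤ ∑ x : α, w' x * H2 (Q (true,x) / w' x) := by
    calc ∑ y : α, w y * H2 (s y) = ∑ x : α, ∑ y : α, (K x y * w y) * H2 (s y) := by
          rw [Finset.sum_comm]
          refine Finset.sum_congr rfl fun y _ => ?_
          rw [Finset.sum_congr rfl (fun x (_ : x ∈ Finset.univ) =>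
            show K x y * w y * H2 (s y) = K x y * (w y * H2 (s y)) by ring),
            ← Finset.sum_mul, hK1 y, one_mul]
      _ ≤ _ := Finset.sum_le_sum fun x _ => hJen x
  have hGJ := (Gf_convex hε0 hε1).map_sum_le (t := Finset.univ)
      (w := w) (p := fun y => H2 (P (true,y) / w y))
      (fun y _ => hw0 y) hw1
      (fun y _ => ⟨H2_nonneg (hqmem y), H2_le_one _⟩)
  have hGs : ∀ y, w y * Gf ε (H2 (P (true,y) / w y)) = w y * H2 (s y) := by
    intro y
    by_cases hwy : w y = 0
    · rw [hwy, zero_mul, zero_mul]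
    · congr 1
      rw [Gf_H2 hε0 hε1 (hqmem y)]
  have chainP := shE_chain P hP0
  simp only [← hwdef] at chainP
  have hdiff : shE P - shE w = ∑ y : α, w y * H2 (P (true,y) / w y) := by
    rw [chainP]; ring
  have e1 : Gf ε (shE P - shE w) ≤ ∑ y : α, w y * H2 (s y) := by
    rw [hdiff]
    calc Gf ε (∑ y : α, w y * H2 (P (true,y) / w y))
        ≤ ∑ y : α, w y * Gf ε (H2 (P (true,y) / w y)) := by
          simpa [smul_eq_mul] using hGJ
      _ = ∑ y : α, w y * H2 (s y) := Finset.sum_congr rfl fun y _ => hGs y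
  linarith [chainQ, step2, e1]

lemma shE_nonneg {α : Type*} [Fintype α] (p : α → ℝ) (h0 : ∀ a, 0 ≤ p a)
    (h1 : ∑ a, p a = 1) : 0 ≤ shE p := by
  unfold shE
  rw [neg_nonneg]
  apply Finset.sum_nonpos
  intro a _
  have hle : p a ≤ 1 := by
    calc p a ≤ ∑ b, p b := Finset.single_le_sum (fun b _ => h0 b) (Finset.mem_univ a)
      _ = 1 := h1
  have hlog := Real.logb_nonpos one_lt_two (h0 a) hle
  exact mul_nonpos_of_nonneg_of_nonpos (h0 a) hlog

lemma shE_le {α : Type*} [Fintype α] (p : α → ℝ) (h0 : ∀ a, 0 ≤ p a)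
    (h1 : ∑ a, p a = 1) : shE p ≤ Real.logb 2 (Fintype.card α) := by
  classical
  have hconc : ConcaveOn ℝ (Ioi 0) (Real.logb 2) := by
    have h := strictConcaveOn_log_Ioi.concaveOn.smul
      (c := (Real.log 2)⁻¹) (by positivity)
    have he : Real.logb 2 = (Real.log 2)⁻¹ • Real.log := by
      funext x; simp [Real.logb, Pi.smul_apply, smul_eq_mul]; ring
    rw [he]; exact h
  set t := Finset.univ.filter (fun a : α => p a ≠ 0) with ht
  have hsum : ∑ a ∈ t, p a = 1 := by rw [ht, Finset.sum_filter_ne_zero, h1]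
  have htne : t.Nonempty := by
    by_contra hc
    rw [Finset.not_nonempty_iff_eq_empty] at hc
    rw [hc, Finset.sum_empty] at hsum
    norm_num at hsum
  have hJ := hconc.le_map_sum (t := t) (w := p) (p := fun a => (p a)⁻¹)
    (fun a _ => h0 a) hsum
    (fun a ha => by
      have := (Finset.mem_filter.mp ha).2
      exact inv_pos.mpr (lt_of_le_of_ne (h0 a) (Ne.symm this)))
  have harg : ∑ a ∈ t, p a • (p a)⁻¹ = (t.card : ℝ) := by
    rw [Finset.sum_congr rfl (fun a ha => by
      rw [smul_eq_mul, mul_inv_cancel₀ (Finset.mem_filter.mp ha).2])]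
    rw [Finset.sum_const, nsmul_eq_mul, mul_one]
  rw [harg] at hJ
  have hlhs : shE p = ∑ a ∈ t, p a • Real.logb 2 (p a)⁻¹ := by
    unfold shE
    have e1 : ∀ a : α, p a • Real.logb 2 (p a)⁻¹ = -(p a * Real.logb 2 (p a)) := by
      intro a; rw [smul_eq_mul, Real.logb_inv]; ring
    rw [Finset.sum_congr rfl (fun a _ => e1 a), ht, Finset.sum_filter_of_ne, Finset.sum_neg_distrib]
    intro x _ hx
    intro hpx
    exact hx (by rw [hpx]; ring)
  rw [hlhs]
  refine le_trans hJ ?_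
  apply Real.logb_le_logb_of_le one_lt_two
  · exact_mod_cast Finset.card_pos.mpr htne
  · exact_mod_cast Finset.card_le_univ t

lemma shE_cube0 (w : Cube 0 → ℝ) (h1 : ∑ y, w y = 1) : shE w = 0 := by
  unfold shE
  rw [Finset.univ_unique, Finset.sum_singleton] at h1
  rw [Finset.univ_unique, Finset.sum_singleton, h1]
  simp

lemma cond_sum_mem {α : Type*} [Fintype α] (P : Bool × α → ℝ) (h0 : ∀ z, 0 ≤ P z)
    (h1 : ∑ z, P z = 1) :
    (∑ y, (P (true,y) + P (false,y)) * H2 (P (true,y) / (P (true,y) + P (false,y))))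
      ∈ Set.Icc (0:ℝ) 1 := by
  constructor
  · apply Finset.sum_nonneg
    intro y _
    exact mul_nonneg (add_nonneg (h0 _) (h0 _)) (H2_nonneg (div_mem_Icc (h0 _) (h0 _)))
  · calc ∑ y, (P (true,y) + P (false,y)) * H2 (P (true,y) / (P (true,y) + P (false,y)))
        ≤ ∑ y, (P (true,y) + P (false,y)) * 1 :=
          Finset.sum_le_sum (fun y _ =>
            mul_le_mul_of_nonneg_left (H2_le_one _) (add_nonneg (h0 _) (h0 _)))
      _ = 1 := by
          rw [Finset.sum_congr rfl (fun y _ => mul_one _), marg_sum P, h1]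

lemma kprod {n : ℕ} (ε : ℝ) (x y : Cube n) :
    ε ^ (hammingDist y x) * (1 - ε) ^ (n - hammingDist y x)
      = ∏ i, (if y i = x i then 1-ε else ε) := by
  classical
  have hd : (Finset.univ.filter (fun i => ¬ (y i = x i))).card = hammingDist y x := by
    simp [hammingDist, ne_eq]
  have hsum := Finset.card_filter_add_card_filter_not
    (s := (Finset.univ : Finset (Fin n))) (p := fun i => y i = x i)
  have hcard : (Finset.univ.filter (fun i => y i = x i)).card = n - hammingDist y x := by
    rw [Finset.card_univ] at hsum
    simp only [Fintype.card_fin] at hsum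
    omega
  rw [← Finset.prod_filter_mul_prod_filter_not Finset.univ (fun i => y i = x i)
      (fun i => if y i = x i then 1-ε else ε)]
  rw [Finset.prod_congr rfl (fun i hi => if_pos (Finset.mem_filter.mp hi).2),
      Finset.prod_congr rfl (fun i hi => if_neg (Finset.mem_filter.mp hi).2)]
  rw [Finset.prod_const, Finset.prod_const, hd, hcard, mul_comm]

lemma sum_cube_succ {n : ℕ} {M : Type*} [AddCommMonoid M] (f : Cube (n+1) → M) :
    ∑ z : Cube (n+1), f z = ∑ b : Bool, ∑ x : Cube n, f (Fin.cons b x) := by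
  rw [← Equiv.sum_comp (Fin.consEquiv (fun _ : Fin (n+1) => Bool)) f]
  rw [Fintype.sum_prod_type]
  rfl

lemma Kn_succ {n : ℕ} (ε : ℝ) (b c : Bool) (u v : Cube n) :
    (∏ i, (if (Fin.cons c v : Cube (n+1)) i = (Fin.cons b u : Cube (n+1)) i then 1-ε else ε))
      = (if c = b then 1-ε else ε) * ∏ i, (if v i = u i then 1-ε else ε) := by
  rw [Fin.prod_univ_succ]
  simp [Fin.cons_zero, Fin.cons_succ]

lemma colsum {n : ℕ} (ε : ℝ) (y : Cube n) :
    ∑ x : Cube n, ∏ i, (if y i = x i then 1-ε else ε) = 1 := by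
  induction n with
  | zero =>
    rw [Finset.sum_congr rfl (fun x _ => Finset.prod_of_isEmpty _)]
    simp
  | succ n ih =>
    rw [sum_cube_succ (f := fun x => ∏ i, if y i = x i then 1-ε else ε)]
    have hy : ∀ (b : Bool) (u : Cube n), (∏ i, if y i = (Fin.cons b u : Cube (n+1)) i then 1-ε else ε)
        = (if y 0 = b then 1-ε else ε) * ∏ i, if Fin.tail y i = u i then 1-ε else ε := by
      intro b u
      rw [Fin.prod_univ_succ]
      simp [Fin.cons_zero, Fin.cons_succ, Fin.tail]
      rfl
    rw [Finset.sum_congr rfl (fun b _ => Finset.sum_congr rfl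
      (fun u (_ : u ∈ Finset.univ) => hy b u))]
    rw [Finset.sum_congr rfl (fun b (_ : b ∈ Finset.univ) => by
      rw [← Finset.mul_sum, ih (y := Fin.tail y), mul_one])]
    rw [Fintype.sum_bool]
    rcases Bool.eq_false_or_eq_true (y 0) with h | h <;> rw [h] <;> simp

lemma noised_nonneg {n : ℕ} {ε : ℝ} (hε0 : 0 ≤ ε) (hε1 : ε ≤ 1) (p : Cube n → ℝ)
    (h0 : ∀ y, 0 ≤ p y) (x : Cube n) :
    0 ≤ ∑ y : Cube n, (∏ i, (if y i = x i then 1-ε else ε)) * p y := by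
  apply Finset.sum_nonneg
  intro y _
  apply mul_nonneg _ (h0 y)
  apply Finset.prod_nonneg
  intro i _
  split_ifs <;> linarith

lemma noised_sum {n : ℕ} {ε : ℝ} (p : Cube n → ℝ) :
    ∑ x : Cube n, (∑ y : Cube n, (∏ i, (if y i = x i then 1-ε else ε)) * p y)
      = ∑ y : Cube n, p y := by
  rw [Finset.sum_comm]
  refine Finset.sum_congr rfl fun y _ => ?_
  rw [← Finset.sum_mul, colsum, one_mul]

set_option maxHeartbeats 1600000 in
lemma main (ε : ℝ) (hε0 : 0 ≤ ε) (hε1 : ε ≤ 1/2) :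
    ∀ (n : ℕ) (p : Cube n → ℝ), (∀ y, 0 ≤ p y) → (∑ y, p y) = 1 →
    (n : ℝ) * Gf ε (shE p / (n:ℝ))
      ≤ shE (fun x : Cube n => ∑ y : Cube n, (∏ i, (if y i = x i then 1-ε else ε)) * p y) := by
  intro n
  induction n with
  | zero =>
    intro p h0 h1
    rw [Nat.cast_zero, zero_mul]
    exact shE_nonneg _ (noised_nonneg hε0 (by linarith) p h0)
      (by rw [noised_sum, h1])
  | succ n ih =>
    intro p h0 h1
    set P : Bool × Cube n → ℝ := fun z => p (Fin.cons z.1 z.2) with hP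
    set w : Cube n → ℝ := fun y => P (true, y) + P (false, y) with hwdef0
    have hP0 : ∀ z, 0 ≤ P z := fun z => h0 _
    have hP1 : ∑ z, P z = 1 := by
      rw [← h1, sum_cube_succ (f := p), Fintype.sum_prod_type]
    have hw0 : ∀ y, 0 ≤ w y := fun y => add_nonneg (hP0 _) (hP0 _)
    have hw1 : ∑ y, w y = 1 := by
      simp only [hwdef0]
      rw [marg_sum P, hP1]
    set Q : Bool × Cube n → ℝ := fun z => ∑ y : Bool × Cube n,
      (if z.1 = y.1 then (1:ℝ)-ε else ε) * (∏ i, (if y.2 i = z.2 i then 1-ε else ε)) * P y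
      with hQ0def
    have hkey := key hε0 hε1 (fun x y => ∏ i, (if y i = x i then 1-ε else ε))
      (fun x y => Finset.prod_nonneg (fun i _ => by split_ifs <;> linarith))
      (fun y => colsum ε y)
      P hP0 hP1 w (fun y => rfl) Q (fun z => rfl)
    have hIH := ih w hw0 hw1
    have hpoint : ∀ b u, Q (b, u)
        = ∑ y : Cube (n+1), (∏ i, (if y i = (Fin.cons b u : Cube (n+1)) i then 1-ε else ε)) * p y := by
      intro b u
      rw [sum_cube_succ (f := fun y =>
        (∏ i, (if y i = (Fin.cons b u : Cube (n+1)) i then 1-ε else ε)) * p y)]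
      simp only [hQ0def]
      rw [Fintype.sum_prod_type]
      refine Finset.sum_congr rfl fun c _ => Finset.sum_congr rfl fun v _ => ?_
      rw [Kn_succ ε b c u v]
      rw [show (if b = c then (1:ℝ)-ε else ε) = (if c = b then 1-ε else ε) from by
        by_cases h : b = c
        · simp [h]
        · simp [h, Ne.symm h]]
      all_goals ring
    have hQeq : shE Q = shE (fun x : Cube (n+1) =>
        ∑ y : Cube (n+1), (∏ i, (if y i = x i then 1-ε else ε)) * p y) := by
      unfold shE
      rw [sum_cube_succ (f := fun x =>
        (∑ y : Cube (n+1), (∏ i, (if y i = x i then 1-ε else ε)) * p y) *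
          Real.logb 2 (∑ y : Cube (n+1), (∏ i, (if y i = x i then 1-ε else ε)) * p y))]
      rw [Fintype.sum_prod_type]
      congr 1
      refine Finset.sum_congr rfl fun b _ => Finset.sum_congr rfl fun u _ => ?_
      rw [hpoint b u]
    have hshEp : shE p = shE P := by
      unfold shE
      rw [sum_cube_succ (f := fun y => p y * Real.logb 2 (p y)), Fintype.sum_prod_type]
    have chainP := shE_chain P hP0
    have hfold : (fun y => P (true,y) + P (false,y)) = w := rfl
    rw [hfold] at chainP
    have hAmem : shE P - shE w ∈ Set.Icc (0:ℝ) 1 := by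
      rw [show shE P - shE w = ∑ y, (P (true,y) + P (false,y)) *
        H2 (P (true,y) / (P (true,y) + P (false,y))) from by rw [chainP]; ring]
      exact cond_sum_mem P hP0 hP1
    have hwEnt0 : 0 ≤ shE w := shE_nonneg w hw0 hw1
    have hwEntn : shE w ≤ (n : ℝ) := by
      have h := shE_le w hw0 hw1
      have hcard : Real.logb 2 (Fintype.card (Cube n)) = (n : ℝ) := by
        rw [show (Fintype.card (Cube n)) = 2^n from by
          rw [Fintype.card_fun]; simp]
        push_cast
        rw [Real.logb_pow, Real.logb_self_eq_one one_lt_two, mul_one]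
      rwa [hcard] at h
    have hBmem : shE w / (n:ℝ) ∈ Set.Icc (0:ℝ) 1 := by
      rcases Nat.eq_zero_or_pos n with hn | hn
      · subst hn
        rw [Nat.cast_zero, div_zero]
        exact ⟨le_refl 0, zero_le_one⟩
      · have hn' : (0:ℝ) < n := by exact_mod_cast hn
        exact ⟨div_nonneg hwEnt0 (le_of_lt hn'), (div_le_one hn').mpr hwEntn⟩
    have hnmul : (n:ℝ) * (shE w / (n:ℝ)) = shE w := by
      rcases Nat.eq_zero_or_pos n with hn | hn
      · subst hn
        rw [shE_cube0 w hw1]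
        simp
      · have hn' : (n:ℝ) ≠ 0 := by
          have : (0:ℝ) < n := by exact_mod_cast hn
          linarith
        field_simp
    have hpos : (0:ℝ) < (n:ℝ) + 1 := by positivity
    have ha1 : (0:ℝ) ≤ 1/((n:ℝ)+1) := by positivity
    have ha2 : (0:ℝ) ≤ (n:ℝ)/((n:ℝ)+1) := by positivity
    have ha3 : 1/((n:ℝ)+1) + (n:ℝ)/((n:ℝ)+1) = 1 := by field_simp; ring
    have hconv := (Gf_convex hε0 hε1).2 hAmem hBmem ha1 ha2 ha3
    simp only [smul_eq_mul] at hconv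
    have harg : 1/((n:ℝ)+1) * (shE P - shE w) + (n:ℝ)/((n:ℝ)+1) * (shE w / (n:ℝ))
        = shE p / ((n:ℝ)+1) := by
      rw [hshEp]
      rw [show (n:ℝ)/((n:ℝ)+1) * (shE w / (n:ℝ)) = ((n:ℝ) * (shE w / (n:ℝ)))/((n:ℝ)+1) from by ring]
      rw [hnmul]
      ring
    rw [harg] at hconv
    have hfinal : ((n:ℝ)+1) * Gf ε (shE p / ((n:ℝ)+1))
        ≤ Gf ε (shE P - shE w) + (n:ℝ) * Gf ε (shE w / (n:ℝ)) := by
      have h := mul_le_mul_of_nonneg_left hconv (le_of_lt hpos)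
      have heq : ((n:ℝ)+1) * (1/((n:ℝ)+1) * Gf ε (shE P - shE w)
          + (n:ℝ)/((n:ℝ)+1) * Gf ε (shE w / (n:ℝ)))
          = Gf ε (shE P - shE w) + (n:ℝ) * Gf ε (shE w / (n:ℝ)) := by
        field_simp
      rw [heq] at h
      exact h
    calc ((n+1 : ℕ) : ℝ) * Gf ε (shE p / ((n+1 : ℕ):ℝ))
        = ((n:ℝ)+1) * Gf ε (shE p / ((n:ℝ)+1)) := by push_cast; ring_nf
      _ ≤ Gf ε (shE P - shE w) + (n:ℝ) * Gf ε (shE w / (n:ℝ)) := hfinal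
      _ ≤ Gf ε (shE P - shE w)
            + shE (fun x : Cube n => ∑ y : Cube n, (∏ i, (if y i = x i then 1-ε else ε)) * w y) := by
          linarith [hIH]
      _ ≤ shE Q := by linarith [hkey]
      _ = _ := hQeq

lemma noise_eq {n : ℕ} (ε : ℝ) (f : Cube n → ℝ) :
    noiseOp ε f = fun x => ∑ y : Cube n, (∏ i, (if y i = x i then 1-ε else ε)) * f y := by
  funext x
  unfold noiseOp
  exact Finset.sum_congr rfl fun y _ => by rw [kprod]

lemma Ent_shE {n : ℕ} (f : Cube n → ℝ) (h0 : ∀ x, 0 ≤ f x) (hS : 0 < ∑ x, f x) :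
    Ent f = EX f * ((n:ℝ) - shE (fun y => f y / (∑ x : Cube n, f x))) := by
  have hSne : (∑ x : Cube n, f x) ≠ 0 := ne_of_gt hS
  have hc : ((2:ℝ)^n) ≠ 0 := by positivity
  unfold Ent EX shE
  have hterm : ∀ y, (f y / (∑ x : Cube n, f x)) * Real.logb 2 (f y / (∑ x : Cube n, f x))
      = (f y * Real.logb 2 (f y)) / (∑ x : Cube n, f x)
        - (f y / (∑ x : Cube n, f x)) * Real.logb 2 (∑ x : Cube n, f x) := by
    intro y
    by_cases hy : f y = 0
    · rw [hy]; simp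
    · rw [Real.logb_div hy hSne]; ring
  rw [Finset.sum_congr rfl fun y _ => hterm y]
  rw [Finset.sum_sub_distrib]
  rw [show (∑ y : Cube n, (f y / (∑ x : Cube n, f x)) * Real.logb 2 (∑ x : Cube n, f x))
      = (∑ y : Cube n, f y / (∑ x : Cube n, f x)) * Real.logb 2 (∑ x : Cube n, f x) from
    (Finset.sum_mul _ _ _).symm]
  rw [← Finset.sum_div, ← Finset.sum_div]
  rw [div_self hSne, one_mul]
  rw [Real.logb_div hSne hc]
  rw [show Real.logb 2 ((2:ℝ)^n) = (n:ℝ) from by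
    rw [Real.logb_pow, Real.logb_self_eq_one one_lt_two, mul_one]]
  field_simp
  ring

end MGLaux

/-- Mrs. Gerber's lemma:
`Ent(T_ε f) ≤ n (E f) φ(Ent(f)/(n E f), ε)` for nonnegative `f` with `E f > 0`. -/
theorem stmt3 {n : ℕ} (ε : ℝ) (hε0 : 0 ≤ ε) (hε1 : ε ≤ 1 / 2)
    (f : Cube n → ℝ) (hf : ∀ x, 0 ≤ f x) (hEf : 0 < EX f) :
    Ent (noiseOp ε f) ≤ (n : ℝ) * EX f * phi (Ent f / ((n : ℝ) * EX f)) ε := by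
  classical
  open MGLaux in
  rcases Nat.eq_zero_or_pos n with hn | hn
  · subst hn
    have hL : Ent (noiseOp ε f) = 0 := by
      unfold Ent EX
      rw [Finset.univ_unique]
      simp only [Finset.sum_singleton]
      norm_num
    rw [hL]
    simp
  · set S := ∑ x : Cube n, f x with hSdef
    have h2pos : (0:ℝ) < 2^n := by positivity
    have hS : 0 < S := by
      have hEf' : 0 < S / 2^n := hEf
      calc S = S / 2^n * 2^n := by field_simp
        _ > 0 := mul_pos hEf' h2pos
    have hSne : S ≠ 0 := ne_of_gt hS
    set p : Cube n → ℝ := fun y => f y / S with hpdef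
    have hp0 : ∀ y, 0 ≤ p y := fun y => div_nonneg (hf y) (le_of_lt hS)
    have hp1 : ∑ y, p y = 1 := by
      simp only [hpdef]
      rw [← Finset.sum_div, ← hSdef, div_self hSne]
    have hmain := MGLaux.main ε hε0 hε1 n p hp0 hp1
    have hEnt : Ent f = EX f * ((n:ℝ) - MGLaux.shE p) := MGLaux.Ent_shE f hf hS
    have hT0 : ∀ x, 0 ≤ noiseOp ε f x := by
      intro x
      rw [MGLaux.noise_eq]
      exact MGLaux.noised_nonneg hε0 (by linarith) f hf x
    have hTsum : ∑ x, noiseOp ε f x = S := by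
      rw [MGLaux.noise_eq, MGLaux.noised_sum]
    have hEXT : EX (noiseOp ε f) = EX f := by
      unfold EX
      rw [hTsum]
    have hpt : (fun y => noiseOp ε f y / (∑ x : Cube n, noiseOp ε f x))
        = fun x : Cube n => ∑ y : Cube n, (∏ i, (if y i = x i then 1-ε else ε)) * p y := by
      funext x
      rw [hTsum, MGLaux.noise_eq]
      rw [Finset.sum_div]
      exact Finset.sum_congr rfl fun y _ => by rw [hpdef]; ring
    have hEnt2 : Ent (noiseOp ε f) = EX f * ((n:ℝ)
        - MGLaux.shE (fun x : Cube n => ∑ y : Cube n, (∏ i, (if y i = x i then 1-ε else ε)) * p y)) := by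
      rw [MGLaux.Ent_shE (noiseOp ε f) hT0 (by rw [hTsum]; exact hS), hEXT, hpt]
    have hnne : (n:ℝ) ≠ 0 := by
      have : (0:ℝ) < n := by exact_mod_cast hn
      linarith
    have hEXne : EX f ≠ 0 := ne_of_gt hEf
    have hphi : phi (Ent f / ((n : ℝ) * EX f)) ε = 1 - MGLaux.Gf ε (MGLaux.shE p / (n:ℝ)) := by
      unfold phi MGLaux.Gf
      rw [hEnt]
      rw [show (1:ℝ) - EX f * ((n:ℝ) - MGLaux.shE p) / ((n:ℝ) * EX f)
          = MGLaux.shE p / (n:ℝ) from by field_simp; ring]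
    rw [hEnt2, hphi]
    nlinarith [hmain, hEf]
end

section
/- Let f : {0,1}^n → ℝ be nonnegative with E_x f = 1, and let 0 ≤ ε ≤ 1/2. Let T be a random subset of {1,…,n} obtained by including each i independently with probability (1−2ε)². Then Ent(T_ε f) ≤ E_T Ent(f | T). -/
open Finset

-- ######################################################################
-- Auxiliary material for the proof of stmt5
-- ######################################################################

section Stmt5Aux

namespace Stmt5Aux

noncomputable def psiN (x : ℝ) : ℝ := (1+x) * Real.log (1+x) + (1-x) * Real.log (1-x)

lemma psiN_continuous : Continuous psiN := by
  have h := Real.continuous_mul_log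
  exact (h.comp (continuous_const.add continuous_id)).add
    (h.comp (continuous_const.sub continuous_id))

noncomputable def Dfun (x : ℝ) : ℝ := x * (Real.log (1+x) - Real.log (1-x)) - 2 * psiN x

noncomputable def Dfun' (x : ℝ) : ℝ :=
  x * (1/(1+x) + 1/(1-x)) - (Real.log (1+x) - Real.log (1-x))

lemma hasDerivAt_logs {x : ℝ} (h1 : -1 < x) (h2 : x < 1) :
    HasDerivAt (fun y : ℝ => Real.log (1+y) - Real.log (1-y)) (1/(1+x) + 1/(1-x)) x := by
  have hp : (0:ℝ) < 1 + x := by linarith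
  have hm : (0:ℝ) < 1 - x := by linarith
  have d1 : HasDerivAt (fun y : ℝ => 1 + y) 1 x := (hasDerivAt_id x).const_add 1
  have d2 : HasDerivAt (fun y : ℝ => 1 - y) (-1) x := by
    simpa using (hasDerivAt_id x).const_sub 1
  have l1 : HasDerivAt (fun y : ℝ => Real.log (1+y)) (1/(1+x)) x := by
    exact ((Real.hasDerivAt_log hp.ne').comp x d1).congr_deriv (by ring)
  have l2 : HasDerivAt (fun y : ℝ => Real.log (1-y)) (-(1/(1-x))) x := by
    exact ((Real.hasDerivAt_log hm.ne').comp x d2).congr_deriv (by ring)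
  exact (l1.sub l2).congr_deriv (by ring)

lemma hasDerivAt_psiN {x : ℝ} (h1 : -1 < x) (h2 : x < 1) :
    HasDerivAt psiN (Real.log (1+x) - Real.log (1-x)) x := by
  have hp : (0:ℝ) < 1 + x := by linarith
  have hm : (0:ℝ) < 1 - x := by linarith
  have d1 : HasDerivAt (fun y : ℝ => 1 + y) 1 x := (hasDerivAt_id x).const_add 1
  have d2 : HasDerivAt (fun y : ℝ => 1 - y) (-1) x := by
    simpa using (hasDerivAt_id x).const_sub 1
  have l1 : HasDerivAt (fun y : ℝ => Real.log (1+y)) (1/(1+x)) x := by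
    exact ((Real.hasDerivAt_log hp.ne').comp x d1).congr_deriv (by ring)
  have l2 : HasDerivAt (fun y : ℝ => Real.log (1-y)) (-(1/(1-x))) x := by
    exact ((Real.hasDerivAt_log hm.ne').comp x d2).congr_deriv (by ring)
  have m1 := d1.mul l1
  have m2 := d2.mul l2
  have := m1.add m2
  refine this.congr_deriv ?_
  field_simp
  ring

lemma hasDerivAt_Dfun {x : ℝ} (h1 : -1 < x) (h2 : x < 1) :
    HasDerivAt Dfun (Dfun' x) x := by
  have hl := hasDerivAt_logs h1 h2
  have hx : HasDerivAt (fun y : ℝ => y) 1 x := hasDerivAt_id x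
  have hm := hx.mul hl
  have hp := hasDerivAt_psiN h1 h2
  have := hm.sub (hp.const_mul 2)
  refine this.congr_deriv ?_
  unfold Dfun'
  ring

lemma hasDerivAt_Dfun' {x : ℝ} (h1 : -1 < x) (h2 : x < 1) :
    HasDerivAt Dfun' (x * (1/(1-x)^2 - 1/(1+x)^2)) x := by
  have hp : (0:ℝ) < 1 + x := by linarith
  have hm : (0:ℝ) < 1 - x := by linarith
  have d1 : HasDerivAt (fun y : ℝ => 1 + y) 1 x := (hasDerivAt_id x).const_add 1
  have d2 : HasDerivAt (fun y : ℝ => 1 - y) (-1) x := by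
    simpa using (hasDerivAt_id x).const_sub 1
  have i1 : HasDerivAt (fun y : ℝ => 1/(1+y)) (-(1/(1+x)^2)) x := by
    have := d1.inv hp.ne'
    simp only [one_div] at this ⊢
    exact this.congr_deriv (by ring)
  have i2 : HasDerivAt (fun y : ℝ => 1/(1-y)) (1/(1-x)^2) x := by
    have := d2.inv hm.ne'
    simp only [one_div] at this ⊢
    exact this.congr_deriv (by ring)
  have hx : HasDerivAt (fun y : ℝ => y) 1 x := hasDerivAt_id x
  have hmul := hx.mul (i1.add i2)
  have hl := hasDerivAt_logs h1 h2
  have := hmul.sub hl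
  refine this.congr_deriv ?_
  simp only [Pi.add_apply]
  field_simp
  ring

lemma contOn_logs :
    ContinuousOn (fun y : ℝ => Real.log (1+y) - Real.log (1-y)) (Set.Ico 0 1) := by
  apply ContinuousOn.sub
  · apply ContinuousOn.log (by fun_prop)
    intro x hx; simp only [Set.mem_Ico] at hx; nlinarith [hx.1]
  · apply ContinuousOn.log (by fun_prop)
    intro x hx; simp only [Set.mem_Ico] at hx; nlinarith [hx.2]

lemma Dfun'_nonneg {x : ℝ} (h0 : 0 ≤ x) (h1 : x < 1) : 0 ≤ Dfun' x := by
  have hmono : MonotoneOn Dfun' (Set.Ico 0 1) := by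
    apply monotoneOn_of_deriv_nonneg (convex_Ico 0 1)
    · apply ContinuousOn.sub
      · apply ContinuousOn.mul continuousOn_id
        apply ContinuousOn.add
        · apply ContinuousOn.div continuousOn_const (by fun_prop)
          intro y hy; simp only [Set.mem_Ico] at hy; nlinarith [hy.1]
        · apply ContinuousOn.div continuousOn_const (by fun_prop)
          intro y hy; simp only [Set.mem_Ico] at hy; nlinarith [hy.2]
      · exact contOn_logs
    · intro y hy
      rw [interior_Ico] at hy
      exact (hasDerivAt_Dfun' (by linarith [hy.1]) hy.2).differentiableAt.differentiableWithinAt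
    · intro y hy
      rw [interior_Ico] at hy
      rw [(hasDerivAt_Dfun' (by linarith [hy.1]) hy.2).deriv]
      have hy0 : 0 < y := hy.1
      have hy1 : y < 1 := hy.2
      have : 1/(1+y)^2 ≤ 1/(1-y)^2 := by
        apply one_div_le_one_div_of_le (by nlinarith) (by nlinarith)
      nlinarith
  have h00 : Dfun' 0 = 0 := by simp [Dfun']
  have := hmono (Set.mem_Ico.mpr ⟨le_refl 0, by norm_num⟩) (Set.mem_Ico.mpr ⟨h0, h1⟩) h0
  linarith [this]

lemma Dfun_nonneg {x : ℝ} (h0 : 0 ≤ x) (h1 : x < 1) : 0 ≤ Dfun x := by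
  have hmono : MonotoneOn Dfun (Set.Ico 0 1) := by
    apply monotoneOn_of_deriv_nonneg (convex_Ico 0 1)
    · apply ContinuousOn.sub
      · exact ContinuousOn.mul continuousOn_id contOn_logs
      · exact (psiN_continuous.continuousOn).const_smul 2 |>.congr
          (fun y _ => by simp [smul_eq_mul])
    · intro y hy
      rw [interior_Ico] at hy
      exact (hasDerivAt_Dfun (by linarith [hy.1]) hy.2).differentiableAt.differentiableWithinAt
    · intro y hy
      rw [interior_Ico] at hy
      rw [(hasDerivAt_Dfun (by linarith [hy.1]) hy.2).deriv]
      exact Dfun'_nonneg (le_of_lt hy.1) hy.2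
  have h00 : Dfun 0 = 0 := by simp [Dfun, psiN]
  have := hmono (Set.mem_Ico.mpr ⟨le_refl 0, by norm_num⟩) (Set.mem_Ico.mpr ⟨h0, h1⟩) h0
  linarith [this]

noncomputable def Hfun (x : ℝ) : ℝ := psiN x / x^2

lemma Hfun_mono : MonotoneOn Hfun (Set.Ioc 0 1) := by
  apply monotoneOn_of_deriv_nonneg (convex_Ioc 0 1)
  · apply ContinuousOn.div psiN_continuous.continuousOn (by fun_prop)
    intro y hy
    simp only [Set.mem_Ioc] at hy
    exact pow_ne_zero _ (ne_of_gt hy.1)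
  · intro y hy
    rw [interior_Ioc] at hy
    have hp := (hasDerivAt_psiN (by linarith [hy.1]) hy.2)
    have hq : HasDerivAt (fun z : ℝ => z^2) (2*y) y := by
      simpa using (hasDerivAt_pow 2 y)
    have := hp.div hq (pow_ne_zero _ (ne_of_gt hy.1))
    exact this.differentiableAt.differentiableWithinAt
  · intro y hy
    rw [interior_Ioc] at hy
    have hy0 := hy.1
    have hp := (hasDerivAt_psiN (by linarith [hy.1]) hy.2)
    have hq : HasDerivAt (fun z : ℝ => z^2) (2*y) y := by
      simpa using (hasDerivAt_pow 2 y)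
    have hder : HasDerivAt Hfun
        (((Real.log (1+y) - Real.log (1-y)) * y^2 - psiN y * (2*y))/(y^2)^2) y :=
      hp.div hq (pow_ne_zero _ (ne_of_gt hy.1))
    rw [hder.deriv]
    have hD := Dfun_nonneg (le_of_lt hy.1) hy.2
    have hnum : 0 ≤ (Real.log (1+y) - Real.log (1-y)) * y^2 - psiN y * (2*y) := by
      have : (Real.log (1+y) - Real.log (1-y)) * y^2 - psiN y * (2*y) = y * Dfun y := by
        unfold Dfun; ring
      rw [this]; positivity
    apply div_nonneg hnum (by positivity)

lemma psiN_even (x : ℝ) : psiN (-x) = psiN x := by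
  unfold psiN
  have h1 : (1:ℝ) + -x = 1 - x := by ring
  have h2 : (1:ℝ) - -x = 1 + x := by ring
  rw [h1, h2]; ring

lemma psiN_zero : psiN 0 = 0 := by simp [psiN]

lemma psiN_key0 {r s : ℝ} (hr0 : 0 ≤ r) (hr1 : r ≤ 1) (hs0 : 0 ≤ s) (hs1 : s ≤ 1) :
    psiN (r * s) ≤ r^2 * psiN s := by
  rcases eq_or_lt_of_le hr0 with hr | hr
  · simp [← hr, psiN_zero]
  rcases eq_or_lt_of_le hs0 with hs | hs
  · simp [← hs, psiN_zero]
  have hrs : 0 < r * s := by positivity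
  have hrs1 : r * s ≤ s := by nlinarith
  have hmem1 : r * s ∈ Set.Ioc (0:ℝ) 1 := ⟨hrs, le_trans hrs1 hs1⟩
  have hmem2 : s ∈ Set.Ioc (0:ℝ) 1 := ⟨hs, hs1⟩
  have hH := Hfun_mono hmem1 hmem2 hrs1
  have e1 : psiN (r*s) = Hfun (r*s) * (r*s)^2 := by
    unfold Hfun; field_simp
  have e2 : Hfun s * (r*s)^2 = r^2 * psiN s := by
    unfold Hfun; field_simp
  rw [e1, ← e2]
  apply mul_le_mul_of_nonneg_right hH (by positivity)

lemma psiN_key {r s : ℝ} (hr0 : 0 ≤ r) (hr1 : r ≤ 1) (hs0 : -1 ≤ s) (hs1 : s ≤ 1) :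
    psiN (r * s) ≤ r^2 * psiN s := by
  rcases le_total 0 s with h | h
  · exact psiN_key0 hr0 hr1 h hs1
  · have := psiN_key0 hr0 hr1 (by linarith : 0 ≤ -s) (by linarith)
    rw [show r * -s = -(r*s) by ring, psiN_even, psiN_even] at this
    exact this

noncomputable def ent2 (a b : ℝ) : ℝ :=
  (a * Real.logb 2 a + b * Real.logb 2 b)/2 - ((a+b)/2) * Real.logb 2 ((a+b)/2)

lemma ent2_scale {m s : ℝ} (hm : 0 < m) (hs0 : -1 ≤ s) (hs1 : s ≤ 1) :
    ent2 (m*(1+s)) (m*(1-s)) = (m/2) * (psiN s / Real.log 2) := by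
  have hl2 : Real.log 2 ≠ 0 := ne_of_gt (Real.log_pos (by norm_num))
  unfold ent2 psiN
  rw [Real.logb, Real.logb, Real.logb]
  have harg : (m*(1+s) + m*(1-s))/2 = m := by ring
  rw [harg]
  rcases eq_or_lt_of_le hs1 with h1 | h1
  · subst h1
    norm_num
    rw [show m*2 = 2*m by ring, Real.log_mul (by norm_num) hm.ne']
    field_simp
    ring
  rcases eq_or_lt_of_le hs0 with h0 | h0
  · rw [show s = -1 from h0.symm]
    norm_num
    rw [show m*2 = 2*m by ring, Real.log_mul (by norm_num) hm.ne']
    field_simp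
    ring
  · have hp : (0:ℝ) < 1 + s := by linarith
    have hq : (0:ℝ) < 1 - s := by linarith
    rw [Real.log_mul hm.ne' hp.ne', Real.log_mul hm.ne' hq.ne']
    field_simp
    ring

lemma ent2_zero : ent2 0 0 = 0 := by simp [ent2]

lemma twoPoint {e a b : ℝ} (he0 : 0 ≤ e) (he1 : e ≤ 1/2) (ha : 0 ≤ a) (hb : 0 ≤ b) :
    ent2 ((1-e)*a + e*b) (e*a + (1-e)*b) ≤ (1-2*e)^2 * ent2 a b := by
  have hl2 : (0:ℝ) < Real.log 2 := Real.log_pos (by norm_num)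
  rcases eq_or_lt_of_le (by linarith : (0:ℝ) ≤ a + b) with h | h
  · have ha0 : a = 0 := by linarith
    have hb0 : b = 0 := by linarith
    simp [ha0, hb0, ent2_zero]
  · set m : ℝ := (a+b)/2 with hmdef
    have hm : 0 < m := by rw [hmdef]; linarith
    set s : ℝ := (a-b)/(a+b) with hsdef
    have hs1 : s ≤ 1 := by
      rw [hsdef, div_le_one h]; linarith
    have hs0 : -1 ≤ s := by
      rw [hsdef, le_div_iff₀ h, neg_one_mul]; linarith
    set r : ℝ := 1 - 2*e with hrdef
    have hr0 : 0 ≤ r := by rw [hrdef]; linarith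
    have hr1 : r ≤ 1 := by rw [hrdef]; linarith
    have hab : a + b ≠ 0 := ne_of_gt h
    have hea : a = m*(1+s) := by
      rw [hmdef, hsdef]; field_simp; ring
    have heb : b = m*(1-s) := by
      rw [hmdef, hsdef]; field_simp; ring
    have hea' : (1-e)*a + e*b = m*(1+r*s) := by
      rw [hrdef]; conv_lhs => rw [hea, heb]
      ring
    have heb' : e*a + (1-e)*b = m*(1-r*s) := by
      rw [hrdef]; conv_lhs => rw [hea, heb]
      ring
    have hrs0 : -1 ≤ r*s := by nlinarith
    have hrs1 : r*s ≤ 1 := by nlinarith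
    rw [hea', heb', ent2_scale hm hrs0 hrs1]
    conv_rhs => rw [hea, heb, ent2_scale hm hs0 hs1]
    have hkey := psiN_key hr0 hr1 hs0 hs1
    have e' : ∀ X:ℝ, m/2*(X/Real.log 2) = m/(2*Real.log 2)*X := by
      intro X; field_simp
    rw [e', e',
      show r^2*(m/(2*Real.log 2)*psiN s) = m/(2*Real.log 2)*(r^2*psiN s) from by ring]
    exact mul_le_mul_of_nonneg_left hkey (by positivity)

-- combinatorial part

def flip1 {n : ℕ} (m : Fin n) (x : Cube n) : Cube n := Function.update x m (!x m)

lemma flip1_apply_ne {n : ℕ} (m : Fin n) (x : Cube n) {i : Fin n} (h : i ≠ m) :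
    flip1 m x i = x i := Function.update_of_ne h _ _

lemma flip1_apply_self {n : ℕ} (m : Fin n) (x : Cube n) : flip1 m x m = !x m :=
  Function.update_self _ _ _

lemma flip1_flip1 {n : ℕ} (m : Fin n) (x : Cube n) : flip1 m (flip1 m x) = x := by
  funext i
  by_cases h : i = m
  · subst h; rw [flip1_apply_self, flip1_apply_self, Bool.not_not]
  · rw [flip1_apply_ne m _ h, flip1_apply_ne m _ h]

lemma flip1_invol {n : ℕ} (m : Fin n) : Function.Involutive (flip1 (n := n) m) :=
  fun x => flip1_flip1 m x

lemma sum_flip {n : ℕ} (m : Fin n) (g : Cube n → ℝ) :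
    ∑ x : Cube n, g (flip1 m x) = ∑ x : Cube n, g x :=
  Fintype.sum_bijective (flip1 m) (flip1_invol m).bijective _ _ (fun _ => rfl)

lemma EX_congr {n : ℕ} {f g : Cube n → ℝ} (h : ∀ x, f x = g x) : EX f = EX g := by
  unfold EX; rw [Finset.sum_congr rfl (fun x _ => h x)]

lemma EX_add {n : ℕ} (f g : Cube n → ℝ) : EX (fun x => f x + g x) = EX f + EX g := by
  unfold EX; rw [Finset.sum_add_distrib, add_div]

lemma EX_sub {n : ℕ} (f g : Cube n → ℝ) : EX (fun x => f x - g x) = EX f - EX g := by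
  unfold EX; rw [Finset.sum_sub_distrib, sub_div]

lemma EX_const_mul {n : ℕ} (c : ℝ) (f : Cube n → ℝ) : EX (fun x => c * f x) = c * EX f := by
  unfold EX; rw [← Finset.mul_sum, mul_div_assoc]

lemma EX_mono {n : ℕ} {f g : Cube n → ℝ} (h : ∀ x, f x ≤ g x) : EX f ≤ EX g := by
  unfold EX
  have hs : (∑ x : Cube n, f x) ≤ ∑ x : Cube n, g x := Finset.sum_le_sum (fun x _ => h x)
  have h2 : (0:ℝ) < 2 ^ n := by positivity
  exact div_le_div_of_nonneg_right hs h2.le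

lemma EX_flip {n : ℕ} (m : Fin n) (g : Cube n → ℝ) :
    EX (fun x => g (flip1 m x)) = EX g := by
  unfold EX; rw [sum_flip]

noncomputable def Em {n : ℕ} (m : Fin n) (f : Cube n → ℝ) : Cube n → ℝ :=
  fun x => (f x + f (flip1 m x))/2

lemma Em_nonneg {n : ℕ} (m : Fin n) {f : Cube n → ℝ} (hf : ∀ x, 0 ≤ f x) (x : Cube n) :
    0 ≤ Em m f x := by
  unfold Em
  have := hf x; have := hf (flip1 m x); linarith

lemma EX_Em {n : ℕ} (m : Fin n) (f : Cube n → ℝ) : EX (Em m f) = EX f := by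
  have h : EX (Em m f) = EX (fun x => (1/2) * f x + (1/2) * f (flip1 m x)) :=
    EX_congr (fun x => by unfold Em; ring)
  rw [h, EX_add, EX_const_mul, EX_const_mul, EX_flip]
  ring

lemma chainRule {n : ℕ} (m : Fin n) (h : Cube n → ℝ) :
    Ent h = Ent (Em m h) + EX (fun x => ent2 (h x) (h (flip1 m x))) := by
  have e0 : EX (fun x => ent2 (h x) (h (flip1 m x)))
      = EX (fun x => (1/2) * (h x * Real.logb 2 (h x))
          + (1/2) * (h (flip1 m x) * Real.logb 2 (h (flip1 m x)))
          - Em m h x * Real.logb 2 (Em m h x)) := by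
    apply EX_congr
    intro x
    unfold ent2 Em
    ring
  rw [e0, EX_sub, EX_add, EX_const_mul, EX_const_mul,
    EX_flip m (fun x => h x * Real.logb 2 (h x))]
  unfold Ent
  rw [EX_Em]
  ring

lemma noiseOpOn_empty {n : ℕ} (e : ℝ) (f : Cube n → ℝ) : noiseOpOn e ∅ f = f := by
  funext x
  unfold noiseOpOn
  rw [Finset.sum_eq_single x]
  · simp
  · intro y _ hy
    rw [if_neg, zero_mul]
    intro hall
    exact hy (funext fun i => hall i (Finset.notMem_empty i))
  · intro hx; exact absurd (Finset.mem_univ x) hx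

lemma noiseOpOn_nonneg {n : ℕ} {e : ℝ} (he0 : 0 ≤ e) (he1 : e ≤ 1) (A : Finset (Fin n))
    {f : Cube n → ℝ} (hf : ∀ x, 0 ≤ f x) (x : Cube n) : 0 ≤ noiseOpOn e A f x := by
  unfold noiseOpOn
  apply Finset.sum_nonneg
  intro y _
  apply mul_nonneg _ (hf y)
  split
  · apply Finset.prod_nonneg; intro i _; split <;> linarith
  · exact le_refl 0

lemma noiseOpOn_lin {n : ℕ} (e : ℝ) (A : Finset (Fin n)) (c d : ℝ) (g h : Cube n → ℝ)
    (x : Cube n) :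
    noiseOpOn e A (fun z => c * g z + d * h z) x
      = c * noiseOpOn e A g x + d * noiseOpOn e A h x := by
  unfold noiseOpOn
  rw [Finset.mul_sum, Finset.mul_sum, ← Finset.sum_add_distrib]
  apply Finset.sum_congr rfl
  intro y _
  ring

lemma noiseOpOn_flip {n : ℕ} (e : ℝ) {A : Finset (Fin n)} {m : Fin n} (hm : m ∉ A)
    (g : Cube n → ℝ) (x : Cube n) :
    noiseOpOn e A g (flip1 m x) = noiseOpOn e A (fun z => g (flip1 m z)) x := by
  unfold noiseOpOn
  rw [← sum_flip m (fun y => (if ∀ i ∉ A, y i = flip1 m x i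
      then ∏ i ∈ A, (if y i = flip1 m x i then 1 - e else e) else 0) * g y)]
  apply Finset.sum_congr rfl
  intro y _
  congr 1
  have hcond : (∀ i ∉ A, flip1 m y i = flip1 m x i) ↔ (∀ i ∉ A, y i = x i) := by
    constructor
    · intro hc i hi
      by_cases him : i = m
      · subst him
        have := hc i hi
        rw [flip1_apply_self, flip1_apply_self] at this
        exact Bool.not_inj this
      · have := hc i hi
        rwa [flip1_apply_ne m _ him, flip1_apply_ne m _ him] at this
    · intro hc i hi
      by_cases him : i = m
      · subst him
        rw [flip1_apply_self, flip1_apply_self, hc i hi]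
      · rw [flip1_apply_ne m _ him, flip1_apply_ne m _ him]
        exact hc i hi
  by_cases hc : ∀ i ∉ A, y i = x i
  · rw [if_pos (hcond.mpr hc), if_pos hc]
    apply Finset.prod_congr rfl
    intro i hi
    have him : i ≠ m := fun h => hm (h ▸ hi)
    rw [flip1_apply_ne m _ him, flip1_apply_ne m _ him]
  · rw [if_neg (fun h => hc (hcond.mp h)), if_neg hc]

lemma noiseOpOn_insert {n : ℕ} (e : ℝ) {A : Finset (Fin n)} {m : Fin n} (hm : m ∉ A)
    (f : Cube n → ℝ) :
    noiseOpOn e (insert m A) f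
      = noiseOpOn e A (fun z => (1-e) * f z + e * f (flip1 m z)) := by
  funext x
  rw [noiseOpOn_lin]
  unfold noiseOpOn
  rw [Finset.mul_sum, Finset.mul_sum]
  rw [show (∑ y : Cube n, e * ((if ∀ i ∉ A, y i = x i
        then ∏ i ∈ A, (if y i = x i then 1 - e else e) else 0) * f (flip1 m y)))
      = ∑ y : Cube n, e * ((if ∀ i ∉ A, flip1 m y i = x i
        then ∏ i ∈ A, (if flip1 m y i = x i then 1 - e else e) else 0) * f y) from by
    rw [← sum_flip m (fun y => e * ((if ∀ i ∉ A, y i = x i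
        then ∏ i ∈ A, (if y i = x i then 1 - e else e) else 0) * f (flip1 m y)))]
    apply Finset.sum_congr rfl
    intro y _
    rw [flip1_flip1]]
  rw [← Finset.sum_add_distrib]
  apply Finset.sum_congr rfl
  intro y _
  have hprodflip : (∏ i ∈ A, (if flip1 m y i = x i then 1 - e else e))
      = ∏ i ∈ A, (if y i = x i then 1 - e else e) := by
    apply Finset.prod_congr rfl
    intro i hi
    rw [flip1_apply_ne m _ (fun h => hm (h ▸ hi))]
  by_cases hbig : ∀ i ∉ insert m A, y i = x i
  · rw [if_pos hbig, Finset.prod_insert hm]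
    by_cases hym : y m = x m
    · have h1 : ∀ i ∉ A, y i = x i := by
        intro i hi
        by_cases him : i = m
        · subst him; exact hym
        · exact hbig i (by simp [him, hi])
      have h2 : ¬ ∀ i ∉ A, flip1 m y i = x i := by
        intro hc
        have := hc m hm
        rw [flip1_apply_self] at this
        rw [← hym] at this
        exact Bool.not_ne_self (y m) this
      rw [if_pos h1, if_neg h2, if_pos hym]
      ring
    · have hym' : (!y m) = x m := by
        cases hy : y m <;> cases hx : x m <;> simp_all
      have h1 : ¬ ∀ i ∉ A, y i = x i := fun hc => hym (hc m hm)
      have h2 : ∀ i ∉ A, flip1 m y i = x i := by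
        intro i hi
        by_cases him : i = m
        · subst him; rw [flip1_apply_self]; exact hym'
        · rw [flip1_apply_ne m _ him]; exact hbig i (by simp [him, hi])
      rw [if_pos h2, if_neg h1, if_neg hym, hprodflip]
      ring
  · push_neg at hbig
    obtain ⟨j, hj, hjne⟩ := hbig
    have hjm : j ≠ m := fun h => hj (h ▸ Finset.mem_insert_self m A)
    have hjA : j ∉ A := fun h => hj (Finset.mem_insert_of_mem h)
    have h1 : ¬ ∀ i ∉ A, y i = x i := fun hc => hjne (hc j hjA)
    have h2 : ¬ ∀ i ∉ A, flip1 m y i = x i := by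
      intro hc
      have := hc j hjA
      rw [flip1_apply_ne m _ hjm] at this
      exact hjne this
    have h3 : ¬ ∀ i ∉ insert m A, y i = x i := by
      intro hc; exact hjne (hc j hj)
    rw [if_neg h1, if_neg h2, if_neg h3]
    ring

lemma noiseOpOn_univ {n : ℕ} (e : ℝ) (f : Cube n → ℝ) :
    noiseOpOn e Finset.univ f = noiseOp e f := by
  funext x
  unfold noiseOpOn noiseOp
  apply Finset.sum_congr rfl
  intro y _
  congr 1
  rw [if_pos (fun i hi => absurd (Finset.mem_univ i) hi)]
  rw [← Finset.prod_filter_mul_prod_filter_not Finset.univ (fun i => y i = x i)]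
  rw [Finset.prod_congr rfl (fun i hi => if_pos (Finset.mem_filter.mp hi).2),
      Finset.prod_congr rfl (fun i hi => if_neg (Finset.mem_filter.mp hi).2)]
  rw [Finset.prod_const, Finset.prod_const]
  have hd : (Finset.univ.filter (fun i => ¬ y i = x i)).card = hammingDist y x := by
    rw [hammingDist]
  have hc : (Finset.univ.filter (fun i => y i = x i)).card = n - hammingDist y x := by
    have := Finset.card_filter_add_card_filter_not
      (s := (Finset.univ : Finset (Fin n))) (p := fun i => y i = x i)
    rw [Finset.card_univ, Fintype.card_fin] at this
    omega
  rw [hd, hc, mul_comm]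

lemma card_cube {n : ℕ} : (Fintype.card (Cube n) : ℝ) = 2 ^ n := by
  simp [Fintype.card_fun]

lemma condE_univ {n : ℕ} (f : Cube n → ℝ) : condE f Finset.univ = f := by
  funext x
  unfold condE
  have h1 : ∀ z : Cube n, f (fun i => if i ∈ Finset.univ then x i else z i) = f x := by
    intro z; congr 1; funext i; simp
  rw [Finset.sum_congr rfl (fun z _ => h1 z), Finset.sum_const, Finset.card_univ]
  rw [nsmul_eq_mul]
  rw [show ((Fintype.card (Cube n) : ℝ)) = 2^n from card_cube]
  have h2 : (0:ℝ) < 2^n := by positivity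
  field_simp

lemma condE_nonneg {n : ℕ} (f : Cube n → ℝ) (hf : ∀ x, 0 ≤ f x) (A : Finset (Fin n))
    (x : Cube n) : 0 ≤ condE f A x := by
  unfold condE
  apply div_nonneg (Finset.sum_nonneg (fun z _ => hf _)) (by positivity)

lemma condE_Em {n : ℕ} {m : Fin n} {S : Finset (Fin n)} (hm : m ∈ S) (f : Cube n → ℝ) :
    condE (Em m f) S = condE f (S.erase m) := by
  funext x
  unfold condE Em
  congr 1
  have key : ∀ z : Cube n, (f (fun i => if i ∈ S then x i else z i)
      + f (flip1 m (fun i => if i ∈ S then x i else z i)))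
      = f (fun i => if i ∈ S.erase m then x i else z i)
        + f (fun i => if i ∈ S.erase m then x i else (flip1 m z) i) := by
    intro z
    by_cases hz : z m = x m
    · have hQ : (fun i => if i ∈ S.erase m then x i else z i)
          = (fun i => if i ∈ S then x i else z i) := by
        funext i
        by_cases him : i = m
        · subst him
          rw [if_neg (fun h => (Finset.mem_erase.mp h).1 rfl), if_pos hm, hz]
        · simp [Finset.mem_erase, him]
      have hQ' : (fun i => if i ∈ S.erase m then x i else (flip1 m z) i)
          = flip1 m (fun i => if i ∈ S then x i else z i) := by
        funext i
        by_cases him : i = m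
        · subst him
          rw [if_neg (fun h => (Finset.mem_erase.mp h).1 rfl), flip1_apply_self,
            flip1_apply_self, if_pos hm, hz]
        · rw [flip1_apply_ne m _ him, flip1_apply_ne m _ him]
          simp [Finset.mem_erase, him]
      rw [hQ, hQ']
    · have hz' : z m = !x m := by
        cases hzz : z m <;> cases hxx : x m <;> simp_all
      have hQ : (fun i => if i ∈ S.erase m then x i else z i)
          = flip1 m (fun i => if i ∈ S then x i else z i) := by
        funext i
        by_cases him : i = m
        · subst him
          rw [if_neg (fun h => (Finset.mem_erase.mp h).1 rfl), flip1_apply_self,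
            if_pos hm, hz']
        · rw [flip1_apply_ne m _ him]
          simp [Finset.mem_erase, him]
      have hQ' : (fun i => if i ∈ S.erase m then x i else (flip1 m z) i)
          = (fun i => if i ∈ S then x i else z i) := by
        funext i
        by_cases him : i = m
        · subst him
          rw [if_neg (fun h => (Finset.mem_erase.mp h).1 rfl), flip1_apply_self,
            if_pos hm, hz', Bool.not_not]
        · rw [flip1_apply_ne m _ him]
          simp [Finset.mem_erase, him]
      rw [hQ, hQ']
      ring
  calc ∑ z : Cube n, (f (fun i => if i ∈ S then x i else z i)
        + f (flip1 m (fun i => if i ∈ S then x i else z i)))/2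
      = (∑ z : Cube n, (f (fun i => if i ∈ S then x i else z i)
        + f (flip1 m (fun i => if i ∈ S then x i else z i))))/2 := by
        rw [← Finset.sum_div]
    _ = (∑ z : Cube n, (f (fun i => if i ∈ S.erase m then x i else z i)
        + f (fun i => if i ∈ S.erase m then x i else (flip1 m z) i)))/2 := by
        rw [Finset.sum_congr rfl (fun z _ => key z)]
    _ = (∑ z : Cube n, f (fun i => if i ∈ S.erase m then x i else z i)
        + ∑ z : Cube n, f (fun i => if i ∈ S.erase m then x i else (flip1 m z) i))/2 := by
        rw [Finset.sum_add_distrib]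
    _ = ∑ z : Cube n, f (fun i => if i ∈ S.erase m then x i else z i) := by
        rw [sum_flip m (fun z => f (fun i => if i ∈ S.erase m then x i else z i))]
        ring

theorem Gthm {n : ℕ} (e : ℝ) (he0 : 0 ≤ e) (he1 : e ≤ 1/2) (A : Finset (Fin n)) :
    ∀ f : Cube n → ℝ, (∀ x, 0 ≤ f x) →
      Ent (noiseOpOn e A f) ≤ ∑ T ∈ A.powerset,
        ((1-2*e)^2) ^ T.card * (1 - (1-2*e)^2) ^ (A.card - T.card)
          * Ent (condE f (T ∪ Aᶜ)) := by
  induction A using Finset.induction_on with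
  | empty =>
    intro f hf
    rw [noiseOpOn_empty]
    rw [Finset.powerset_empty, Finset.sum_singleton]
    simp only [Finset.card_empty, pow_zero, one_mul, Nat.sub_zero, Finset.empty_union]
    rw [Finset.compl_empty, condE_univ]
  | @insert m A hm ih =>
    intro f hf
    have he1' : e ≤ 1 := by linarith
    set l : ℝ := (1-2*e)^2 with hldef
    have hl0 : 0 ≤ l := sq_nonneg _
    have hl1 : l ≤ 1 := by rw [hldef]; nlinarith
    obtain ⟨g, hgdef⟩ : ∃ g : Cube n → ℝ, g = fun z => (1-e) * f z + e * f (flip1 m z) :=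
      ⟨_, rfl⟩
    have hrw : noiseOpOn e (insert m A) f = noiseOpOn e A g := by
      rw [hgdef]; exact noiseOpOn_insert e hm f
    have hEmg : Em m g = Em m f := by
      funext z
      unfold Em
      rw [hgdef]
      simp only
      rw [flip1_flip1]
      ring
    have hcommg : Em m (noiseOpOn e A g) = noiseOpOn e A (Em m f) := by
      funext x
      have hL : Em m (noiseOpOn e A g) x
          = (noiseOpOn e A g x + noiseOpOn e A (fun z => g (flip1 m z)) x)/2 := by
        unfold Em
        rw [noiseOpOn_flip e hm g x]
      have h1 : noiseOpOn e A (Em m f) x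
          = noiseOpOn e A (fun z => (1/2) * g z + (1/2) * (g (flip1 m z))) x := by
        congr 1
        funext z
        rw [← hEmg]
        unfold Em
        ring
      rw [hL, h1, noiseOpOn_lin]
      ring
    have hcommf : Em m (noiseOpOn e A f) = noiseOpOn e A (Em m f) := by
      funext x
      have hL : Em m (noiseOpOn e A f) x
          = (noiseOpOn e A f x + noiseOpOn e A (fun z => f (flip1 m z)) x)/2 := by
        unfold Em
        rw [noiseOpOn_flip e hm f x]
      have h1 : noiseOpOn e A (Em m f) x
          = noiseOpOn e A (fun z => (1/2) * f z + (1/2) * (f (flip1 m z))) x := by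
        congr 1
        funext z
        unfold Em
        ring
      rw [hL, h1, noiseOpOn_lin]
      ring
    have hfib : ∀ x, ent2 (noiseOpOn e A g x) (noiseOpOn e A g (flip1 m x))
        ≤ l * ent2 (noiseOpOn e A f x) (noiseOpOn e A f (flip1 m x)) := by
      intro x
      have ha : 0 ≤ noiseOpOn e A f x := noiseOpOn_nonneg he0 he1' A hf x
      have hb : 0 ≤ noiseOpOn e A f (flip1 m x) := noiseOpOn_nonneg he0 he1' A hf _
      have e1 : noiseOpOn e A g x
          = (1-e) * noiseOpOn e A f x + e * noiseOpOn e A f (flip1 m x) := by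
        rw [hgdef, noiseOpOn_lin, noiseOpOn_flip e hm f x]
      have e2 : noiseOpOn e A g (flip1 m x)
          = e * noiseOpOn e A f x + (1-e) * noiseOpOn e A f (flip1 m x) := by
        rw [noiseOpOn_flip e hm g x]
        have hgs : (fun z => g (flip1 m z)) = fun z => e * f z + (1-e) * f (flip1 m z) := by
          funext z
          rw [hgdef]
          simp only
          rw [flip1_flip1]
          ring
        rw [hgs, noiseOpOn_lin, noiseOpOn_flip e hm f x]
      rw [e1, e2]
      exact twoPoint he0 he1 ha hb
    have hEXfib : EX (fun x => ent2 (noiseOpOn e A g x) (noiseOpOn e A g (flip1 m x)))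
        ≤ l * EX (fun x => ent2 (noiseOpOn e A f x) (noiseOpOn e A f (flip1 m x))) := by
      calc EX (fun x => ent2 (noiseOpOn e A g x) (noiseOpOn e A g (flip1 m x)))
          ≤ EX (fun x => l * ent2 (noiseOpOn e A f x) (noiseOpOn e A f (flip1 m x))) :=
            EX_mono hfib
        _ = l * EX (fun x => ent2 (noiseOpOn e A f x) (noiseOpOn e A f (flip1 m x))) :=
            EX_const_mul _ _
    have hchaing := chainRule m (noiseOpOn e A g)
    have hchainf := chainRule m (noiseOpOn e A f)
    rw [hcommg] at hchaing
    rw [hcommf] at hchainf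
    have hIH1 := ih f hf
    have hIH2 := ih (Em m f) (Em_nonneg m hf)
    have hmul1 : l * Ent (noiseOpOn e A f)
        ≤ l * ∑ T ∈ A.powerset,
            l ^ T.card * (1 - l) ^ (A.card - T.card) * Ent (condE f (T ∪ Aᶜ)) :=
      mul_le_mul_of_nonneg_left hIH1 hl0
    have hmul2 : (1-l) * Ent (noiseOpOn e A (Em m f))
        ≤ (1-l) * ∑ T ∈ A.powerset,
            l ^ T.card * (1 - l) ^ (A.card - T.card) * Ent (condE (Em m f) (T ∪ Aᶜ)) :=
      mul_le_mul_of_nonneg_left hIH2 (by linarith)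
    have hsum : ∑ T ∈ (insert m A).powerset,
          l ^ T.card * (1-l) ^ ((insert m A).card - T.card)
            * Ent (condE f (T ∪ (insert m A)ᶜ))
        = (1-l) * (∑ T ∈ A.powerset,
            l ^ T.card * (1-l) ^ (A.card - T.card) * Ent (condE (Em m f) (T ∪ Aᶜ)))
          + l * (∑ T ∈ A.powerset,
            l ^ T.card * (1-l) ^ (A.card - T.card) * Ent (condE f (T ∪ Aᶜ))) := by
      rw [Finset.sum_powerset_insert hm, Finset.mul_sum, Finset.mul_sum]
      congr 1
      · apply Finset.sum_congr rfl
        intro T hT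
        have hTA := Finset.mem_powerset.mp hT
        have hmT : m ∉ T := fun h => hm (hTA h)
        have hcard : (insert m A).card - T.card = (A.card - T.card) + 1 := by
          rw [Finset.card_insert_of_notMem hm]
          have := Finset.card_le_card hTA
          omega
        have hmTA : m ∈ T ∪ Aᶜ := Finset.mem_union_right T (Finset.mem_compl.mpr hm)
        have hset : T ∪ (insert m A)ᶜ = (T ∪ Aᶜ).erase m := by
          ext i
          simp only [Finset.mem_union, Finset.mem_compl, Finset.mem_insert,
            Finset.mem_erase]
          by_cases him : i = m
          · subst him
            simp [hmT, hm]
          · simp [him]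
        rw [hset, ← condE_Em hmTA f, hcard, pow_succ]
        ring
      · apply Finset.sum_congr rfl
        intro T hT
        have hTA := Finset.mem_powerset.mp hT
        have hmT : m ∉ T := fun h => hm (hTA h)
        have hced : (insert m T).card = T.card + 1 := Finset.card_insert_of_notMem hmT
        have hcard2 : (insert m A).card - (insert m T).card = A.card - T.card := by
          rw [Finset.card_insert_of_notMem hm, hced]
          omega
        have hset2 : insert m T ∪ (insert m A)ᶜ = T ∪ Aᶜ := by
          ext i
          simp only [Finset.mem_union, Finset.mem_compl, Finset.mem_insert]
          by_cases him : i = m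
          · subst him
            simp [hm]
          · simp [him]
        rw [hcard2, hced, hset2, pow_succ]
        ring
    rw [hrw, hsum]
    have hfibf : EX (fun x => ent2 (noiseOpOn e A f x) (noiseOpOn e A f (flip1 m x)))
        = Ent (noiseOpOn e A f) - Ent (noiseOpOn e A (Em m f)) := by
      linarith [hchainf]
    have hlf : l * EX (fun x => ent2 (noiseOpOn e A f x) (noiseOpOn e A f (flip1 m x)))
        = l * Ent (noiseOpOn e A f) - l * Ent (noiseOpOn e A (Em m f)) := by
      rw [hfibf]
      ring
    linarith [hchaing, hEXfib, hmul1, hmul2]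

end Stmt5Aux

end Stmt5Aux


/-- for nonnegative `f` with `E f = 1` and `T` a random subset of `[n]`
including each `i` independently with probability `(1-2ε)²`,
`Ent(T_ε f) ≤ E_T Ent(f|T)`. -/
theorem stmt5 {n : ℕ} (ε : ℝ) (hε0 : 0 ≤ ε) (hε1 : ε ≤ 1 / 2)
    (f : Cube n → ℝ) (hf : ∀ x, 0 ≤ f x) (hEf : EX f = 1) :
    Ent (noiseOp ε f) ≤ ETsub ((1 - 2 * ε) ^ 2) (fun T => EntC f T) := by
  have hG := Stmt5Aux.Gthm ε hε0 hε1 Finset.univ f hf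
  rw [Stmt5Aux.noiseOpOn_univ] at hG
  refine hG.trans_eq ?_
  rw [Finset.powerset_univ]
  unfold ETsub EntC
  apply Finset.sum_congr rfl
  intro T _
  rw [Finset.compl_univ, Finset.union_empty, Finset.card_univ, Fintype.card_fin]
end
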